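/- Let T be a bounded linear operator on H^p (1 ≤ p < ∞), and let B_I, B_{I'} be disjoint finite collections of pairwise disjoint dyadic intervals, each interval of measure at most α. For random signs θ set b_I^θ = Σ_{K∈B_I} θ_K h_K and Y(θ) = ⟨T b_I^θ, b_{I'}^θ⟩. Then E[Y²] ≤ ‖T‖² α^{1/2}. -/

import Mathlib

open MeasureTheory

/-- The dyadic interval `[(k-1)/2^n, k/2^n)`, encoded by the pair `K = (n, k)`. -/
def dyadicSet (K : ℕ × ℕ) : Set ℝ := Set.Ico ((K.2 - 1 : ℝ) / 2 ^ K.1) ((K.2 : ℝ) / 2 ^ K.1)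

/-- `(n, k)` encodes a genuine dyadic interval of `[0,1)` iff `1 ≤ k ≤ 2^n`. -/
def IsDyadic (K : ℕ × ℕ) : Prop := 1 ≤ K.2 ∧ K.2 ≤ 2 ^ K.1

/-- The `L^∞`-normalized Haar function `h_I = χ_{I^+} - χ_{I^-}` of the dyadic interval
encoded by `K = (n, k)`. -/
noncomputable def haar (K : ℕ × ℕ) : ℝ → ℝ := fun x =>
  (Set.Ico ((2 * K.2 - 2 : ℝ) / 2 ^ (K.1 + 1)) ((2 * K.2 - 1 : ℝ) / 2 ^ (K.1 + 1))).indicator 1 x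
  - (Set.Ico ((2 * K.2 - 1 : ℝ) / 2 ^ (K.1 + 1)) ((2 * K.2 : ℝ) / 2 ^ (K.1 + 1))).indicator 1 x

open ProbabilityTheory

/-- The function `Σ_{K ∈ 𝒟} c_K h_K` determined by a coefficient vector `c` on a finite
index set `𝒟` of dyadic intervals. -/
noncomputable def haarFn (𝒟 : Finset (ℕ × ℕ)) (c : ℕ × ℕ → ℝ) : ℝ → ℝ :=
  fun x => ∑ K ∈ 𝒟, c K * haar K x

/-- The `H^p` square-function norm of `Σ_{K ∈ 𝒟} c_K h_K`. -/
noncomputable def HpNorm (𝒟 : Finset (ℕ × ℕ)) (p : ℝ) (c : ℕ × ℕ → ℝ) : ℝ :=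
  (∫ x in (0:ℝ)..1, (∑ K ∈ 𝒟, (c K * haar K x) ^ 2) ^ (p / 2)) ^ (1 / p)

namespace OffDiag

noncomputable def wK (K : ℕ × ℕ) : ℝ := ((2:ℝ) ^ K.1)⁻¹

lemma wK_pos (K : ℕ × ℕ) : 0 < wK K := by
  have : (0:ℝ) < 2 ^ K.1 := by positivity
  simpa [wK] using this

lemma wK_le_one (K : ℕ × ℕ) : wK K ≤ 1 := by
  have h : (1:ℝ) ≤ 2 ^ K.1 := one_le_pow₀ (by norm_num)
  rw [wK]
  exact inv_le_one_of_one_le₀ h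

abbrev lhalf (K : ℕ × ℕ) : Set ℝ :=
  Set.Ico ((2 * K.2 - 2 : ℝ) / 2 ^ (K.1 + 1)) ((2 * K.2 - 1 : ℝ) / 2 ^ (K.1 + 1))
abbrev rhalf (K : ℕ × ℕ) : Set ℝ :=
  Set.Ico ((2 * K.2 - 1 : ℝ) / 2 ^ (K.1 + 1)) ((2 * K.2 : ℝ) / 2 ^ (K.1 + 1))

lemma haar_def (K : ℕ × ℕ) (x : ℝ) :
    haar K x = (lhalf K).indicator 1 x - (rhalf K).indicator 1 x := rfl

lemma lhalf_disj_rhalf (K : ℕ × ℕ) (x : ℝ) (h1 : x ∈ lhalf K) (h2 : x ∈ rhalf K) : False :=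
  absurd h2.1 (not_le.mpr h1.2)

lemma dyadicSet_eq_union (K : ℕ × ℕ) : dyadicSet K = lhalf K ∪ rhalf K := by
  have hpos : (0:ℝ) < 2 ^ (K.1+1) := by positivity
  rw [Set.Ico_union_Ico_eq_Ico (by gcongr <;> norm_num) (by gcongr <;> norm_num)]
  unfold dyadicSet
  have h1 : ((K.2:ℝ) - 1) / 2 ^ K.1 = (2 * K.2 - 2 : ℝ) / 2 ^ (K.1+1) := by
    rw [div_eq_div_iff (by positivity) (by positivity), pow_succ]; ring
  have h2 : ((K.2:ℝ)) / 2 ^ K.1 = (2 * K.2 : ℝ) / 2 ^ (K.1+1) := by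
    rw [div_eq_div_iff (by positivity) (by positivity), pow_succ]; ring
  rw [h1, h2]

lemma haar_eq_zero_of_not_mem {K : ℕ × ℕ} {x : ℝ} (h : x ∉ dyadicSet K) : haar K x = 0 := by
  rw [dyadicSet_eq_union] at h
  rw [haar_def, Set.indicator_of_notMem (fun hx => h (Set.mem_union_left _ hx)),
    Set.indicator_of_notMem (fun hx => h (Set.mem_union_right _ hx)), sub_zero]

lemma haar_eq_one {K : ℕ × ℕ} {x : ℝ} (h : x ∈ lhalf K) : haar K x = 1 := by
  have h2 : x ∉ rhalf K := fun h2 => lhalf_disj_rhalf K x h h2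
  rw [haar_def, Set.indicator_of_mem h, Set.indicator_of_notMem h2]
  norm_num

lemma haar_eq_neg_one {K : ℕ × ℕ} {x : ℝ} (h : x ∈ rhalf K) : haar K x = -1 := by
  have h1 : x ∉ lhalf K := fun h1 => lhalf_disj_rhalf K x h1 h
  rw [haar_def, Set.indicator_of_notMem h1, Set.indicator_of_mem h]
  norm_num

lemma haar_sq (K : ℕ × ℕ) (x : ℝ) :
    (haar K x) ^ 2 = (dyadicSet K).indicator 1 x := by
  by_cases hx : x ∈ dyadicSet K
  · have hx' := hx
    rw [dyadicSet_eq_union] at hx'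
    rw [Set.indicator_of_mem hx]
    rcases hx' with h | h
    · rw [haar_eq_one h]; norm_num
    · rw [haar_eq_neg_one h]; norm_num
  · rw [Set.indicator_of_notMem hx, haar_eq_zero_of_not_mem hx]
    norm_num

lemma abs_haar_le_one (K : ℕ × ℕ) (x : ℝ) : |haar K x| ≤ 1 := by
  rw [haar_def, Set.indicator_apply, Set.indicator_apply]
  split_ifs <;> norm_num

lemma measurable_haar (K : ℕ × ℕ) : Measurable (haar K) :=
  (measurable_const.indicator measurableSet_Ico).sub
    (measurable_const.indicator measurableSet_Ico)

/-- Key dyadic trichotomy, in a form with integer numerators. -/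
lemma Ico_subset_or_disjoint {n s : ℕ} (hsn : s ≤ n) (k a : ℤ) :
    Set.Ico ((k - 1 : ℝ) / 2 ^ n) ((k : ℝ) / 2 ^ n)
      ⊆ Set.Ico ((a : ℝ) / 2 ^ s) ((a + 1 : ℝ) / 2 ^ s)
    ∨ ∀ x ∈ Set.Ico ((k - 1 : ℝ) / 2 ^ n) ((k : ℝ) / 2 ^ n),
        x ∉ Set.Ico ((a : ℝ) / 2 ^ s) ((a + 1 : ℝ) / 2 ^ s) := by
  have hpow : (0:ℝ) < 2 ^ n := by positivity
  have hpows : (0:ℝ) < 2 ^ s := by positivity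
  set m : ℤ := 2 ^ (n - s) with hm
  have hmpos : (0:ℤ) < m := by positivity
  have hmR : ((m:ℤ):ℝ) = (2:ℝ) ^ (n - s) := by rw [hm]; push_cast; ring
  have hkey : ∀ b : ℝ, b / 2 ^ s = b * (m:ℝ) / 2 ^ n := by
    intro b
    rw [hmR, show (2:ℝ)^n = 2^s * 2^(n-s) by rw [← pow_add]; congr 1; omega]
    rw [div_eq_div_iff (by positivity) (by positivity)]
    ring
  by_cases h1 : k ≤ a * m
  · right
    rintro x ⟨hx1, hx2⟩ ⟨hy1, hy2⟩
    have hc : (k:ℝ) ≤ (a:ℝ) * m := by exact_mod_cast h1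
    rw [hkey (a:ℝ)] at hy1
    have : (k:ℝ) / 2 ^ n ≤ (a:ℝ) * m / 2 ^ n := by gcongr
    linarith
  · by_cases h2 : (a + 1) * m ≤ k - 1
    · right
      rintro x ⟨hx1, hx2⟩ ⟨hy1, hy2⟩
      have hc : ((a:ℝ) + 1) * m ≤ (k:ℝ) - 1 := by exact_mod_cast h2
      rw [hkey ((a:ℝ) + 1)] at hy2
      have : ((a:ℝ) + 1) * m / 2 ^ n ≤ ((k:ℝ) - 1) / 2 ^ n := by gcongr
      linarith
    · left
      push_neg at h1 h2
      have hA : (a:ℝ) * m ≤ (k:ℝ) - 1 := by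
        have : a * m ≤ k - 1 := by omega
        exact_mod_cast this
      have hB : (k:ℝ) ≤ ((a:ℝ) + 1) * m := by
        have : k ≤ (a + 1) * m := by omega
        exact_mod_cast this
      apply Set.Ico_subset_Ico
      · rw [hkey (a:ℝ)]; gcongr
      · rw [hkey ((a:ℝ) + 1)]; gcongr

end OffDiag
namespace OffDiag

noncomputable abbrev μ0 : Measure ℝ := volume.restrict (Set.Ioc (0:ℝ) 1)

instance : IsProbabilityMeasure μ0 := by
  constructor
  rw [Measure.restrict_apply_univ, Real.volume_Ioc]
  norm_num

lemma integrable_of_bounded {f : ℝ → ℝ} (hm : Measurable f) (c : ℝ) (hb : ∀ x, |f x| ≤ c) :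
    Integrable f μ0 := by
  refine ⟨hm.aestronglyMeasurable, ?_⟩
  apply MeasureTheory.HasFiniteIntegral.of_bounded (C := c)
  exact Filter.Eventually.of_forall (fun x => by simpa [Real.norm_eq_abs] using hb x)

lemma intervalIntegral_eq (f : ℝ → ℝ) : (∫ x in (0:ℝ)..1, f x) = ∫ x, f x ∂μ0 := by
  rw [intervalIntegral.integral_of_le (by norm_num)]

lemma integral_indicator_Ico {a b : ℝ} (h0 : 0 ≤ a) (hab : a ≤ b) (hb1 : b ≤ 1) :
    ∫ x, (Set.Ico a b).indicator (1 : ℝ → ℝ) x ∂μ0 = b - a := by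
  rw [MeasureTheory.integral_indicator measurableSet_Ico]
  simp only [Pi.one_apply]
  rw [MeasureTheory.setIntegral_const]
  have h : μ0 (Set.Ico a b) = ENNReal.ofReal (b - a) := by
    rw [Measure.restrict_apply measurableSet_Ico]
    apply le_antisymm
    · calc volume (Set.Ico a b ∩ Set.Ioc 0 1) ≤ volume (Set.Icc a b) :=
            measure_mono (fun x hx => ⟨hx.1.1, le_of_lt hx.1.2⟩)
        _ = ENNReal.ofReal (b - a) := Real.volume_Icc
    · calc ENNReal.ofReal (b - a) = volume (Set.Ioo a b) := Real.volume_Ioo.symm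
        _ ≤ volume (Set.Ico a b ∩ Set.Ioc 0 1) := measure_mono (fun x hx =>
            ⟨⟨le_of_lt hx.1, hx.2⟩, ⟨lt_of_le_of_lt h0 hx.1, le_trans (le_of_lt hx.2) hb1⟩⟩)
  rw [measureReal_def, h, ENNReal.toReal_ofReal (by linarith)]
  simp

lemma integrable_indicator_Ico (a b : ℝ) :
    Integrable ((Set.Ico a b).indicator (1 : ℝ → ℝ)) μ0 := by
  have hm : Measurable ((Set.Ico a b).indicator (1 : ℝ → ℝ)) :=
    measurable_one.indicator measurableSet_Ico
  apply integrable_of_bounded hm 1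
  intro x
  rw [Set.indicator_apply]
  split_ifs <;> norm_num

lemma integrable_haar (K : ℕ × ℕ) : Integrable (haar K) μ0 :=
  integrable_of_bounded (measurable_haar K) 1 (abs_haar_le_one K)

lemma dyadic_facts {K : ℕ × ℕ} (hK : IsDyadic K) :
    (0:ℝ) ≤ 2 * K.2 - 2 ∧ (2 * K.2 : ℝ) ≤ 2 ^ (K.1 + 1) ∧ (0:ℝ) ≤ (K.2:ℝ) - 1
      ∧ ((K.2:ℝ)) ≤ 2 ^ K.1 := by
  obtain ⟨h1, h2⟩ := hK
  have c1 : (1:ℝ) ≤ (K.2:ℝ) := by exact_mod_cast h1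
  have c2 : ((K.2:ℝ)) ≤ 2 ^ K.1 := by exact_mod_cast h2
  refine ⟨by linarith, ?_, by linarith, c2⟩
  rw [pow_succ]
  linarith

lemma integral_haar_eq_zero {K : ℕ × ℕ} (hK : IsDyadic K) : ∫ x, haar K x ∂μ0 = 0 := by
  obtain ⟨c1, c2, _, _⟩ := dyadic_facts hK
  have hpos : (0:ℝ) < 2 ^ (K.1 + 1) := by positivity
  simp_rw [haar_def]
  rw [MeasureTheory.integral_sub (integrable_indicator_Ico _ _) (integrable_indicator_Ico _ _)]
  rw [integral_indicator_Ico (by positivity) (by gcongr <;> linarith)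
      (by rw [div_le_one hpos]; linarith),
    integral_indicator_Ico (by apply div_nonneg _ hpos.le; linarith) (by gcongr <;> linarith)
      (by rw [div_le_one hpos]; linarith)]
  ring

lemma integral_haar_sq {K : ℕ × ℕ} (hK : IsDyadic K) : ∫ x, (haar K x) ^ 2 ∂μ0 = wK K := by
  obtain ⟨_, _, c3, c4⟩ := dyadic_facts hK
  have hpos : (0:ℝ) < 2 ^ K.1 := by positivity
  simp_rw [haar_sq]
  have : dyadicSet K = Set.Ico ((K.2 - 1 : ℝ) / 2 ^ K.1) ((K.2 : ℝ) / 2 ^ K.1) := rfl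
  rw [this, integral_indicator_Ico (by positivity) (by gcongr <;> linarith)
    (by rw [div_le_one hpos]; linarith)]
  rw [wK, div_sub_div_same]
  rw [show ((K.2:ℝ) - ((K.2:ℝ) - 1)) = 1 by ring, one_div]

lemma mem_dyadic_of_haar_ne {K : ℕ × ℕ} {x : ℝ} (h : haar K x ≠ 0) : x ∈ dyadicSet K := by
  by_contra hx; exact h (haar_eq_zero_of_not_mem hx)

lemma Ico_subset_or_disjoint' {n s : ℕ} (hsn : s ≤ n) (k a : ℤ) {c d e f : ℝ}
    (hc : c = ((k:ℝ) - 1) / 2 ^ n) (hd : d = (k:ℝ) / 2 ^ n) (he : e = (a:ℝ) / 2 ^ s)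
    (hf : f = ((a:ℝ) + 1) / 2 ^ s) :
    Set.Ico c d ⊆ Set.Ico e f ∨ ∀ x ∈ Set.Ico c d, x ∉ Set.Ico e f := by
  subst hc hd he hf
  exact Ico_subset_or_disjoint hsn k a

lemma integral_haar_mul_aux {M L : ℕ × ℕ} (hM : IsDyadic M) (hL : IsDyadic L) (hne : M ≠ L)
    (hlev : M.1 ≤ L.1) : ∫ x, haar M x * haar L x ∂μ0 = 0 := by
  rcases eq_or_lt_of_le hlev with heq | hlt
  · -- same level, different position: disjoint supports
    have hne2 : M.2 ≠ L.2 := fun h2 => hne (Prod.ext heq h2)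
    have hzero : ∀ x, haar M x * haar L x = 0 := by
      intro x
      by_cases hMx : haar M x = 0
      · rw [hMx, zero_mul]
      by_cases hLx : haar L x = 0
      · rw [hLx, mul_zero]
      exfalso
      have hxM := mem_dyadic_of_haar_ne hMx
      have hxL := mem_dyadic_of_haar_ne hLx
      have hpos : (0:ℝ) < 2 ^ L.1 := by positivity
      rw [dyadicSet, heq] at hxM
      rcases lt_or_gt_of_ne hne2 with h | h
      · have : (M.2:ℝ) ≤ (L.2:ℝ) - 1 := by
          have : (M.2:ℕ) + 1 ≤ L.2 := h
          have := (Nat.cast_le (α := ℝ)).mpr this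
          push_cast at this; linarith
        have h1 : x < (M.2:ℝ) / 2 ^ L.1 := hxM.2
        have h2 : ((L.2:ℝ) - 1) / 2 ^ L.1 ≤ x := hxL.1
        have h3 : (M.2:ℝ) / 2 ^ L.1 ≤ ((L.2:ℝ) - 1) / 2 ^ L.1 := by gcongr
        linarith
      · have : (L.2:ℝ) ≤ (M.2:ℝ) - 1 := by
          have : (L.2:ℕ) + 1 ≤ M.2 := h
          have := (Nat.cast_le (α := ℝ)).mpr this
          push_cast at this; linarith
        have h1 : x < (L.2:ℝ) / 2 ^ L.1 := hxL.2
        have h2 : ((M.2:ℝ) - 1) / 2 ^ L.1 ≤ x := hxM.1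
        have h3 : (L.2:ℝ) / 2 ^ L.1 ≤ ((M.2:ℝ) - 1) / 2 ^ L.1 := by gcongr
        linarith
    rw [show (fun x => haar M x * haar L x) = (fun _ => (0:ℝ)) from funext hzero]
    simp
  · -- M strictly coarser
    have hs : M.1 + 1 ≤ L.1 := hlt
    have t1 := Ico_subset_or_disjoint' hs (L.2:ℤ) (2*(M.2:ℤ)-2)
      (c := ((L.2:ℝ) - 1)/2^L.1) (d := (L.2:ℝ)/2^L.1)
      (e := (2 * M.2 - 2 : ℝ) / 2 ^ (M.1 + 1)) (f := (2 * M.2 - 1 : ℝ) / 2 ^ (M.1 + 1))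
      (by push_cast; ring) (by push_cast; ring) (by push_cast; ring) (by push_cast; ring)
    have t2 := Ico_subset_or_disjoint' hs (L.2:ℤ) (2*(M.2:ℤ)-1)
      (c := ((L.2:ℝ) - 1)/2^L.1) (d := (L.2:ℝ)/2^L.1)
      (e := (2 * M.2 - 1 : ℝ) / 2 ^ (M.1 + 1)) (f := (2 * M.2 : ℝ) / 2 ^ (M.1 + 1))
      (by push_cast; ring) (by push_cast; ring) (by push_cast; ring) (by push_cast; ring)
    have hdL : dyadicSet L = Set.Ico (((L.2:ℝ) - 1)/2^L.1) ((L.2:ℝ)/2^L.1) := rfl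
    rcases t1 with hsub | hdisj1
    · -- L inside left half of M : haar M = 1 there
      have hzero : ∀ x, haar M x * haar L x = haar L x := by
        intro x
        by_cases hLx : haar L x = 0
        · rw [hLx, mul_zero]
        have hxL := mem_dyadic_of_haar_ne hLx
        rw [hdL] at hxL
        rw [haar_eq_one (hsub hxL), one_mul]
      rw [show (fun x => haar M x * haar L x) = (fun x => haar L x) from funext hzero]
      exact integral_haar_eq_zero hL
    rcases t2 with hsub | hdisj2
    · have hzero : ∀ x, haar M x * haar L x = -haar L x := by
        intro x
        by_cases hLx : haar L x = 0
        · rw [hLx, mul_zero, neg_zero]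
        have hxL := mem_dyadic_of_haar_ne hLx
        rw [hdL] at hxL
        rw [haar_eq_neg_one (hsub hxL)]
        ring
      rw [show (fun x => haar M x * haar L x) = (fun x => -haar L x) from funext hzero]
      rw [MeasureTheory.integral_neg, integral_haar_eq_zero hL, neg_zero]
    · have hzero : ∀ x, haar M x * haar L x = 0 := by
        intro x
        by_cases hLx : haar L x = 0
        · rw [hLx, mul_zero]
        have hxL := mem_dyadic_of_haar_ne hLx
        rw [hdL] at hxL
        have hnM : x ∉ dyadicSet M := by
          rw [dyadicSet_eq_union]
          rintro (h | h)
          · exact hdisj1 x hxL h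
          · exact hdisj2 x hxL h
        rw [haar_eq_zero_of_not_mem hnM, zero_mul]
      rw [show (fun x => haar M x * haar L x) = (fun _ => (0:ℝ)) from funext hzero]
      simp

lemma integral_haar_mul {M L : ℕ × ℕ} (hM : IsDyadic M) (hL : IsDyadic L) (hne : M ≠ L) :
    ∫ x, haar M x * haar L x ∂μ0 = 0 := by
  rcases le_total M.1 L.1 with h | h
  · exact integral_haar_mul_aux hM hL hne h
  · rw [show (fun x => haar M x * haar L x) = (fun x => haar L x * haar M x)
      from funext (fun x => mul_comm _ _)]
    exact integral_haar_mul_aux hL hM (Ne.symm hne) h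

end OffDiag
namespace OffDiag

lemma sq_rpow_half {d p : ℝ} : ((d ^ 2) : ℝ) ^ (p / 2) = |d| ^ p := by
  rw [← sq_abs d, ← Real.rpow_natCast |d| 2, ← Real.rpow_mul (abs_nonneg d)]
  rw [show ((2:ℕ):ℝ) * (p/2) = p by push_cast; ring]

section Pairing

variable {𝒟 : Finset (ℕ × ℕ)}

lemma measurable_haarFn (𝒟 : Finset (ℕ × ℕ)) (c : (ℕ×ℕ) → ℝ) : Measurable (haarFn 𝒟 c) := by
  unfold haarFn
  exact Finset.measurable_sum _ (fun K _ => measurable_const.mul (measurable_haar K))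

lemma abs_haarFn_le (𝒟 : Finset (ℕ × ℕ)) (c : (ℕ×ℕ) → ℝ) (x : ℝ) :
    |haarFn 𝒟 c x| ≤ ∑ K ∈ 𝒟, |c K| := by
  unfold haarFn
  refine (Finset.abs_sum_le_sum_abs _ _).trans (Finset.sum_le_sum fun K _ => ?_)
  rw [abs_mul]
  calc |c K| * |haar K x| ≤ |c K| * 1 :=
        mul_le_mul_of_nonneg_left (abs_haar_le_one K x) (abs_nonneg _)
    _ = |c K| := mul_one _

lemma integrable_haarFn_mul (𝒟 : Finset (ℕ × ℕ)) (c d : (ℕ×ℕ) → ℝ) :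
    Integrable (fun x => haarFn 𝒟 c x * haarFn 𝒟 d x) μ0 := by
  apply integrable_of_bounded ((measurable_haarFn 𝒟 c).mul (measurable_haarFn 𝒟 d))
    ((∑ K ∈ 𝒟, |c K|) * (∑ K ∈ 𝒟, |d K|))
  intro x
  rw [Pi.mul_apply, abs_mul]
  exact mul_le_mul (abs_haarFn_le 𝒟 c x) (abs_haarFn_le 𝒟 d x) (abs_nonneg _)
    (Finset.sum_nonneg fun K _ => abs_nonneg _)

lemma integrable_haarFn_mul_haar (𝒟 : Finset (ℕ × ℕ)) (c : (ℕ×ℕ) → ℝ) (J : ℕ×ℕ) :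
    Integrable (fun x => haarFn 𝒟 c x * haar J x) μ0 := by
  apply integrable_of_bounded ((measurable_haarFn 𝒟 c).mul (measurable_haar J))
    (∑ K ∈ 𝒟, |c K|)
  intro x
  rw [Pi.mul_apply, abs_mul]
  calc |haarFn 𝒟 c x| * |haar J x| ≤ (∑ K ∈ 𝒟, |c K|) * 1 :=
        mul_le_mul (abs_haarFn_le 𝒟 c x) (abs_haar_le_one J x) (abs_nonneg _)
          (Finset.sum_nonneg fun K _ => abs_nonneg _)
    _ = _ := mul_one _

lemma integrable_const_mul_haar_mul (a : ℝ) (M L : ℕ×ℕ) :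
    Integrable (fun x => a * (haar M x * haar L x)) μ0 := by
  apply integrable_of_bounded
    (measurable_const.mul ((measurable_haar M).mul (measurable_haar L))) (|a|)
  intro x
  simp only [Pi.mul_apply]
  rw [abs_mul, abs_mul]
  have h1 : |haar M x| * |haar L x| ≤ 1 := by
    calc |haar M x| * |haar L x| ≤ 1 * 1 :=
          mul_le_mul (abs_haar_le_one M x) (abs_haar_le_one L x) (abs_nonneg _) zero_le_one
      _ = 1 := one_mul 1
  calc |a| * (|haar M x| * |haar L x|) ≤ |a| * 1 :=
        mul_le_mul_of_nonneg_left h1 (abs_nonneg a)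
    _ = |a| := mul_one _

lemma pairing (h𝒟 : ∀ K ∈ 𝒟, IsDyadic K) (c d : (ℕ×ℕ) → ℝ) :
    ∫ x, haarFn 𝒟 c x * haarFn 𝒟 d x ∂μ0 = ∑ M ∈ 𝒟, c M * d M * wK M := by
  have e1 : ∀ x : ℝ, haarFn 𝒟 c x * haarFn 𝒟 d x
      = ∑ M ∈ 𝒟, ∑ L ∈ 𝒟, c M * d L * (haar M x * haar L x) := by
    intro x
    unfold haarFn
    rw [Finset.sum_mul_sum]
    exact Finset.sum_congr rfl fun M _ => Finset.sum_congr rfl fun L _ => by ring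
  simp_rw [e1]
  rw [MeasureTheory.integral_finset_sum _ (fun M _ =>
    integrable_finset_sum _ (fun L _ => integrable_const_mul_haar_mul _ M L))]
  apply Finset.sum_congr rfl
  intro M hM
  rw [MeasureTheory.integral_finset_sum _ (fun L _ => integrable_const_mul_haar_mul _ M L)]
  rw [Finset.sum_eq_single_of_mem M hM]
  · rw [MeasureTheory.integral_const_mul]
    simp_rw [← pow_two]
    rw [integral_haar_sq (h𝒟 M hM)]
  · intro L hL hne
    rw [MeasureTheory.integral_const_mul,
      integral_haar_mul (h𝒟 M hM) (h𝒟 L hL) (Ne.symm hne), mul_zero]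

/-- standard basis coefficient vector -/
def es (J : ℕ × ℕ) : (ℕ × ℕ) → ℝ := fun M => if M = J then 1 else 0

lemma haarFn_es {J : ℕ×ℕ} (hJ : J ∈ 𝒟) (x : ℝ) : haarFn 𝒟 (es J) x = haar J x := by
  unfold haarFn es
  rw [Finset.sum_eq_single_of_mem J hJ]
  · rw [if_pos rfl, one_mul]
  · intro L _ hne
    rw [if_neg hne, zero_mul]

lemma pairing_haar (h𝒟 : ∀ K ∈ 𝒟, IsDyadic K) (c : (ℕ×ℕ) → ℝ) {J : ℕ×ℕ} (hJ : J ∈ 𝒟) :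
    ∫ x, haarFn 𝒟 c x * haar J x ∂μ0 = c J * wK J := by
  have e1 : ∀ x : ℝ, haarFn 𝒟 c x * haar J x = haarFn 𝒟 c x * haarFn 𝒟 (es J) x := by
    intro x; rw [haarFn_es hJ]
  simp_rw [e1]
  rw [pairing h𝒟 c (es J)]
  rw [Finset.sum_eq_single_of_mem J hJ]
  · simp [es]
  · intro L _ hne
    simp [es, hne]

lemma measurable_Q (𝒟 : Finset (ℕ × ℕ)) (c : (ℕ×ℕ) → ℝ) :
    Measurable (fun x => ∑ K ∈ 𝒟, (c K * haar K x) ^ 2) :=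
  Finset.measurable_sum _ fun K _ => (measurable_const.mul (measurable_haar K)).pow_const 2

lemma measurable_Qp (𝒟 : Finset (ℕ × ℕ)) (c : (ℕ×ℕ) → ℝ) (q : ℝ) (hq : 0 ≤ q) :
    Measurable (fun x => (∑ K ∈ 𝒟, (c K * haar K x) ^ 2) ^ q) :=
  (Real.continuous_rpow_const hq).measurable.comp (measurable_Q 𝒟 c)

lemma Q_nonneg (𝒟 : Finset (ℕ × ℕ)) (c : (ℕ×ℕ) → ℝ) (x : ℝ) :
    0 ≤ ∑ K ∈ 𝒟, (c K * haar K x) ^ 2 := Finset.sum_nonneg fun _ _ => sq_nonneg _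

lemma Q_le (𝒟 : Finset (ℕ × ℕ)) (c : (ℕ×ℕ) → ℝ) (x : ℝ) :
    ∑ K ∈ 𝒟, (c K * haar K x) ^ 2 ≤ ∑ K ∈ 𝒟, (c K) ^ 2 := by
  refine Finset.sum_le_sum fun K _ => ?_
  have h2 : (haar K x) ^ 2 ≤ 1 := by
    rw [haar_sq]
    by_cases hx : x ∈ dyadicSet K
    · rw [Set.indicator_of_mem hx]; norm_num
    · rw [Set.indicator_of_notMem hx]; norm_num
  rw [mul_pow]
  calc (c K) ^ 2 * (haar K x) ^ 2 ≤ (c K) ^ 2 * 1 :=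
        mul_le_mul_of_nonneg_left h2 (sq_nonneg _)
    _ = (c K) ^ 2 := mul_one _

lemma integrable_Qp (𝒟 : Finset (ℕ × ℕ)) (c : (ℕ×ℕ) → ℝ) (q : ℝ) (hq : 0 ≤ q) :
    Integrable (fun x => (∑ K ∈ 𝒟, (c K * haar K x) ^ 2) ^ q) μ0 := by
  apply integrable_of_bounded (measurable_Qp 𝒟 c q hq) ((∑ K ∈ 𝒟, (c K)^2 + 1) ^ q)
  intro x
  rw [abs_of_nonneg (Real.rpow_nonneg (Q_nonneg 𝒟 c x) _)]
  apply Real.rpow_le_rpow (Q_nonneg 𝒟 c x) _ hq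
  have := Q_le 𝒟 c x
  linarith

noncomputable def Iq (𝒟 : Finset (ℕ × ℕ)) (p : ℝ) (c : (ℕ×ℕ) → ℝ) : ℝ :=
  ∫ x, (∑ K ∈ 𝒟, (c K * haar K x) ^ 2) ^ (p/2) ∂μ0

lemma HpNorm_eq (p : ℝ) (c : (ℕ×ℕ) → ℝ) : HpNorm 𝒟 p c = (Iq 𝒟 p c) ^ (1/p) := by
  rw [HpNorm, Iq, intervalIntegral_eq]

lemma Iq_nonneg (𝒟 : Finset (ℕ × ℕ)) (p : ℝ) (c : (ℕ×ℕ) → ℝ) : 0 ≤ Iq 𝒟 p c :=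
  integral_nonneg fun x => Real.rpow_nonneg (Q_nonneg 𝒟 c x) _

lemma Iq_le_pow {p : ℝ} (hp : 1 ≤ p) {c : (ℕ×ℕ) → ℝ} {N : ℝ} (h : HpNorm 𝒟 p c ≤ N) :
    Iq 𝒟 p c ≤ N ^ p := by
  have hp0 : p ≠ 0 := by linarith
  have h0 : 0 ≤ Iq 𝒟 p c := Iq_nonneg 𝒟 p c
  rw [HpNorm_eq] at h
  have e : ((Iq 𝒟 p c) ^ (1/p : ℝ)) ^ p = Iq 𝒟 p c := by
    rw [← Real.rpow_mul h0, one_div, inv_mul_cancel₀ hp0, Real.rpow_one]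
  calc Iq 𝒟 p c = ((Iq 𝒟 p c) ^ (1/p : ℝ)) ^ p := e.symm
    _ ≤ N ^ p := Real.rpow_le_rpow (Real.rpow_nonneg h0 _) h (by linarith)

end Pairing

end OffDiag
namespace OffDiag

section Disj

variable {𝒟 B : Finset (ℕ × ℕ)}

/-- disjointness hypothesis abbreviation -/
def PD (B : Finset (ℕ × ℕ)) : Prop :=
  (B : Set (ℕ × ℕ)).Pairwise fun K L => Disjoint (dyadicSet K) (dyadicSet L)

lemma PD.not_mem {B : Finset (ℕ × ℕ)} (hdisj : PD B) {L L0 : ℕ×ℕ} (hL : L ∈ B) (hL0 : L0 ∈ B)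
    (hne : L ≠ L0) {x : ℝ} (hx0 : x ∈ dyadicSet L0) : x ∉ dyadicSet L := fun hx =>
  Set.disjoint_left.mp (hdisj (Finset.mem_coe.mpr hL) (Finset.mem_coe.mpr hL0) hne) hx hx0

lemma sum_ind_le_one (hdisj : PD B) (x : ℝ) :
    ∑ L ∈ B, (dyadicSet L).indicator (1 : ℝ → ℝ) x ≤ 1 := by
  by_cases hx : ∃ L0 ∈ B, x ∈ dyadicSet L0
  · obtain ⟨L0, hL0, hxL0⟩ := hx
    rw [Finset.sum_eq_single_of_mem L0 hL0
      (fun L hL hne => Set.indicator_of_notMem (hdisj.not_mem hL hL0 hne hxL0) _)]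
    rw [Set.indicator_of_mem hxL0]
    norm_num
  · push_neg at hx
    rw [Finset.sum_eq_zero fun L hL => Set.indicator_of_notMem (hx L hL) _]
    norm_num

lemma integral_indicator_dyadic {K : ℕ×ℕ} (hK : IsDyadic K) :
    ∫ x, (dyadicSet K).indicator (1 : ℝ → ℝ) x ∂μ0 = wK K := by
  obtain ⟨_, _, c3, c4⟩ := dyadic_facts hK
  have hpos : (0:ℝ) < 2 ^ K.1 := by positivity
  have e : dyadicSet K = Set.Ico ((K.2 - 1 : ℝ) / 2 ^ K.1) ((K.2 : ℝ) / 2 ^ K.1) := rfl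
  rw [e, integral_indicator_Ico (by positivity) (by gcongr; linarith)
    (by rw [div_le_one hpos]; linarith)]
  rw [wK, div_sub_div_same, show ((K.2:ℝ) - ((K.2:ℝ) - 1)) = 1 by ring, one_div]

lemma integrable_ind_dyadic (a : ℝ) (K : ℕ×ℕ) :
    Integrable (fun x => a * (dyadicSet K).indicator (1 : ℝ → ℝ) x) μ0 := by
  have e : dyadicSet K = Set.Ico ((K.2 - 1 : ℝ) / 2 ^ K.1) ((K.2 : ℝ) / 2 ^ K.1) := rfl
  rw [e]
  exact (integrable_indicator_Ico _ _).const_mul a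

lemma integrable_sum_ind (v : (ℕ×ℕ) → ℝ) :
    Integrable (fun x => ∑ L ∈ B, v L * (dyadicSet L).indicator (1 : ℝ → ℝ) x) μ0 :=
  integrable_finset_sum _ fun L _ => integrable_ind_dyadic (v L) L

lemma integral_sum_ind (h𝒟 : ∀ K ∈ 𝒟, IsDyadic K) (hB : B ⊆ 𝒟) (v : (ℕ×ℕ) → ℝ) :
    ∫ x, (∑ L ∈ B, v L * (dyadicSet L).indicator (1 : ℝ → ℝ) x) ∂μ0 = ∑ L ∈ B, v L * wK L := by
  rw [MeasureTheory.integral_finset_sum _ (fun L _ => integrable_ind_dyadic (v L) L)]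
  exact Finset.sum_congr rfl fun L hL => by
    rw [MeasureTheory.integral_const_mul, integral_indicator_dyadic (h𝒟 L (hB hL))]

/-- pointwise identity for vectors supported on a pairwise-disjoint family -/
lemma Qp_eq_sum_ind {p : ℝ} (hp : 0 < p) (hB : B ⊆ 𝒟) (hdisj : PD B) {d : (ℕ×ℕ) → ℝ}
    (hsupp : ∀ M, M ∉ B → d M = 0) (x : ℝ) :
    (∑ K ∈ 𝒟, (d K * haar K x) ^ 2) ^ (p/2)
      = ∑ L ∈ B, |d L| ^ p * (dyadicSet L).indicator (1 : ℝ → ℝ) x := by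
  have hQ : ∑ K ∈ 𝒟, (d K * haar K x) ^ 2 = ∑ K ∈ B, (d K * haar K x) ^ 2 := by
    symm
    apply Finset.sum_subset hB
    intro K _ hKB
    rw [hsupp K hKB]
    ring
  rw [hQ]
  by_cases hx : ∃ L0 ∈ B, x ∈ dyadicSet L0
  · obtain ⟨L0, hL0, hxL0⟩ := hx
    have h1 : ∑ K ∈ B, (d K * haar K x) ^ 2 = (d L0) ^ 2 := by
      rw [Finset.sum_eq_single_of_mem L0 hL0 (fun L hL hne => by
        rw [haar_eq_zero_of_not_mem (hdisj.not_mem hL hL0 hne hxL0)]; ring)]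
      rw [mul_pow, haar_sq, Set.indicator_of_mem hxL0]
      simp
    have h2 : ∑ L ∈ B, |d L| ^ p * (dyadicSet L).indicator (1 : ℝ → ℝ) x = |d L0| ^ p := by
      rw [Finset.sum_eq_single_of_mem L0 hL0 (fun L hL hne => by
        rw [Set.indicator_of_notMem (hdisj.not_mem hL hL0 hne hxL0)]; ring)]
      rw [Set.indicator_of_mem hxL0]
      simp
    rw [h1, h2, sq_rpow_half]
  · push_neg at hx
    rw [Finset.sum_eq_zero fun L hL => by
        rw [haar_eq_zero_of_not_mem (hx L hL)]; ring,
      Finset.sum_eq_zero fun L hL => by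
        rw [Set.indicator_of_notMem (hx L hL)]; ring,
      Real.zero_rpow (by positivity : (p/2:ℝ) ≠ 0)]

lemma sum_wK_le_one (h𝒟 : ∀ K ∈ 𝒟, IsDyadic K) (hB : B ⊆ 𝒟) (hdisj : PD B) :
    ∑ L ∈ B, wK L ≤ 1 := by
  have h := MeasureTheory.integral_mono (integrable_sum_ind (B := B) (fun _ => 1))
    (integrable_const 1) (fun x => by
      simpa using sum_ind_le_one hdisj x)
  rw [integral_sum_ind h𝒟 hB (fun _ => 1)] at h
  simpa using h

/-- lower bound : the `ℓ^p(w)`-sum over a disjoint subfamily is at most `Iq`. -/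
lemma sum_le_Iq {p : ℝ} (hp : 1 ≤ p) (h𝒟 : ∀ K ∈ 𝒟, IsDyadic K) (hB : B ⊆ 𝒟) (hdisj : PD B)
    (d : (ℕ×ℕ) → ℝ) : ∑ L ∈ B, |d L| ^ p * wK L ≤ Iq 𝒟 p d := by
  have hpt : ∀ x : ℝ, (∑ L ∈ B, |d L| ^ p * (dyadicSet L).indicator (1 : ℝ → ℝ) x)
      ≤ (∑ K ∈ 𝒟, (d K * haar K x) ^ 2) ^ (p/2) := by
    intro x
    by_cases hx : ∃ L0 ∈ B, x ∈ dyadicSet L0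
    · obtain ⟨L0, hL0, hxL0⟩ := hx
      have h2 : ∑ L ∈ B, |d L| ^ p * (dyadicSet L).indicator (1 : ℝ → ℝ) x = |d L0| ^ p := by
        rw [Finset.sum_eq_single_of_mem L0 hL0 (fun L hL hne => by
          rw [Set.indicator_of_notMem (hdisj.not_mem hL hL0 hne hxL0)]; ring)]
        rw [Set.indicator_of_mem hxL0]
        simp
      have h3 : (d L0) ^ 2 ≤ ∑ K ∈ 𝒟, (d K * haar K x) ^ 2 := by
        have : (d L0 * haar L0 x) ^ 2 = (d L0) ^ 2 := by
          rw [mul_pow, haar_sq, Set.indicator_of_mem hxL0]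
          simp
        rw [← this]
        exact Finset.single_le_sum (f := fun K => (d K * haar K x) ^ 2)
          (fun K _ => sq_nonneg _) (hB hL0)
      rw [h2, ← sq_rpow_half]
      exact Real.rpow_le_rpow (sq_nonneg _) h3 (by positivity)
    · push_neg at hx
      rw [Finset.sum_eq_zero fun L hL => by
        rw [Set.indicator_of_notMem (hx L hL)]; ring]
      exact Real.rpow_nonneg (Q_nonneg 𝒟 d x) _
  have h := MeasureTheory.integral_mono (integrable_sum_ind (B := B) (fun L => |d L| ^ p))
    (integrable_Qp 𝒟 d (p/2) (by positivity)) hpt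
  rw [integral_sum_ind h𝒟 hB] at h
  exact h

/-- `Q` of a `±1`-valued vector supported on a disjoint family is at most 1 pointwise. -/
lemma Q_sign_le_one (hB : B ⊆ 𝒟) (hdisj : PD B) {e : (ℕ×ℕ) → ℝ}
    (hsupp : ∀ M, M ∉ B → e M = 0) (habs : ∀ M ∈ B, |e M| = 1) (x : ℝ) :
    ∑ K ∈ 𝒟, (e K * haar K x) ^ 2 ≤ 1 := by
  have hQ : ∑ K ∈ 𝒟, (e K * haar K x) ^ 2 = ∑ K ∈ B, (e K * haar K x) ^ 2 := by
    symm
    apply Finset.sum_subset hB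
    intro K _ hKB
    rw [hsupp K hKB]
    ring
  have he : ∀ K ∈ B, (e K * haar K x) ^ 2 = (dyadicSet K).indicator (1 : ℝ → ℝ) x := by
    intro K hK
    rw [mul_pow, haar_sq, ← sq_abs (e K), habs K hK]
    by_cases hx : x ∈ dyadicSet K
    · rw [Set.indicator_of_mem hx]; simp
    · rw [Set.indicator_of_notMem hx]; simp
  rw [hQ, Finset.sum_congr rfl he]
  exact sum_ind_le_one hdisj x

/-- `Iq` of a `±1`-valued vector supported on a disjoint family is at most 1. -/
lemma Iq_sign_le_one {p : ℝ} (hp : 1 ≤ p) (h𝒟 : ∀ K ∈ 𝒟, IsDyadic K) (hB : B ⊆ 𝒟)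
    (hdisj : PD B) {e : (ℕ×ℕ) → ℝ} (hsupp : ∀ M, M ∉ B → e M = 0)
    (habs : ∀ M ∈ B, |e M| = 1) : Iq 𝒟 p e ≤ 1 := by
  rw [Iq]
  calc ∫ x, (∑ K ∈ 𝒟, (e K * haar K x) ^ 2) ^ (p/2) ∂μ0 ≤ ∫ _, (1:ℝ) ∂μ0 := by
        apply MeasureTheory.integral_mono (integrable_Qp 𝒟 e (p/2) (by positivity))
          (integrable_const 1)
        intro x
        calc (∑ K ∈ 𝒟, (e K * haar K x) ^ 2) ^ (p/2)
            ≤ (1:ℝ) ^ (p/2) := Real.rpow_le_rpow (Q_nonneg 𝒟 e x)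
              (Q_sign_le_one hB hdisj hsupp habs x) (by positivity)
          _ = 1 := Real.one_rpow _
    _ = 1 := by simp

end Disj

/-- Jensen: on the probability space `μ0`, `∫ u ≤ (∫ u^p)^(1/p)` for `p ≥ 1`. -/
lemma jensen {p : ℝ} (hp : 1 ≤ p) {u : ℝ → ℝ} (hm : Measurable u) (hnn : ∀ x, 0 ≤ u x)
    (c : ℝ) (hb : ∀ x, u x ≤ c) : ∫ x, u x ∂μ0 ≤ (∫ x, u x ^ p ∂μ0) ^ (1/p : ℝ) := by
  rcases eq_or_lt_of_le hp with h1 | h1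
  · rw [← h1]
    simp [Real.rpow_one]
  · have hpq : p.HolderConjugate (Real.conjExponent p) := Real.HolderConjugate.conjExponent h1
    have hmem1 : MemLp u (ENNReal.ofReal p) μ0 :=
      MemLp.of_bound hm.aestronglyMeasurable c (ae_of_all _ fun x => by
        rw [Real.norm_eq_abs, abs_of_nonneg (hnn x)]; exact hb x)
    have hmem2 : MemLp (fun _ : ℝ => (1:ℝ)) (ENNReal.ofReal (Real.conjExponent p)) μ0 :=
      memLp_const 1
    have h := MeasureTheory.integral_mul_le_Lp_mul_Lq_of_nonneg hpq (ae_of_all _ hnn)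
      (ae_of_all _ fun _ => zero_le_one) hmem1 hmem2
    simp only [mul_one, Real.one_rpow] at h
    simpa using h

end OffDiag
namespace OffDiag

lemma rpow_rpow {x : ℝ} (hx : 0 ≤ x) (a b : ℝ) : (x ^ a) ^ b = x ^ (a * b) :=
  (Real.rpow_mul hx a b).symm

lemma rpow_two' (x : ℝ) : x ^ (2:ℝ) = x ^ 2 := by
  rw [show (2:ℝ) = ((2:ℕ):ℝ) by norm_num, Real.rpow_natCast]

/-- Duality-type bound: pairing against a square-function-bounded vector. -/
lemma pair_le {𝒟 : Finset (ℕ×ℕ)} {p : ℝ} (hp : 1 ≤ p) (h𝒟 : ∀ K ∈ 𝒟, IsDyadic K)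
    (d e : (ℕ×ℕ) → ℝ) (he : ∀ x, ∑ K ∈ 𝒟, (e K * haar K x) ^ 2 ≤ 1) :
    ∑ M ∈ 𝒟, d M * e M * wK M ≤ (Iq 𝒟 p d) ^ (1/p : ℝ) := by
  have hint : ∀ (M : ℕ×ℕ) (a : ℝ), Integrable (fun x => a * (haar M x)^2) μ0 := by
    intro M a
    have e1 : ∀ x : ℝ, a * (haar M x)^2 = a * (haar M x * haar M x) := fun x => by ring
    simp_rw [e1]
    exact integrable_const_mul_haar_mul a M M
  have step1 : ∑ M ∈ 𝒟, d M * e M * wK M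
      = ∫ x, (∑ M ∈ 𝒟, d M * e M * (haar M x)^2) ∂μ0 := by
    rw [MeasureTheory.integral_finset_sum _ (fun M _ => hint M _)]
    exact (Finset.sum_congr rfl fun M hM => by
      rw [MeasureTheory.integral_const_mul, integral_haar_sq (h𝒟 M hM)]).symm
  rw [step1]
  have step2 : ∀ x, (∑ M ∈ 𝒟, d M * e M * (haar M x)^2)
      ≤ Real.sqrt (∑ K ∈ 𝒟, (d K * haar K x)^2) := by
    intro x
    have hcs := Finset.sum_mul_sq_le_sq_mul_sq 𝒟 (fun M => d M * haar M x)
      (fun M => e M * haar M x)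
    have h1 : ∑ M ∈ 𝒟, d M * e M * (haar M x)^2
        = ∑ M ∈ 𝒟, (d M * haar M x) * (e M * haar M x) :=
      Finset.sum_congr rfl fun M _ => by ring
    rw [h1]
    have h2 : (∑ M ∈ 𝒟, (d M * haar M x) * (e M * haar M x))^2
        ≤ ∑ K ∈ 𝒟, (d K * haar K x)^2 := by
      calc (∑ M ∈ 𝒟, (d M * haar M x) * (e M * haar M x))^2
          ≤ (∑ K ∈ 𝒟, (d K * haar K x)^2) * (∑ K ∈ 𝒟, (e K * haar K x)^2) := hcs
        _ ≤ (∑ K ∈ 𝒟, (d K * haar K x)^2) * 1 :=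
            mul_le_mul_of_nonneg_left (he x) (Q_nonneg 𝒟 d x)
        _ = _ := mul_one _
    calc (∑ M ∈ 𝒟, (d M * haar M x) * (e M * haar M x))
        ≤ |∑ M ∈ 𝒟, (d M * haar M x) * (e M * haar M x)| := le_abs_self _
      _ = Real.sqrt ((∑ M ∈ 𝒟, (d M * haar M x) * (e M * haar M x))^2) :=
          (Real.sqrt_sq_eq_abs _).symm
      _ ≤ Real.sqrt (∑ K ∈ 𝒟, (d K * haar K x)^2) := Real.sqrt_le_sqrt h2
  have hms : Measurable (fun x => Real.sqrt (∑ K ∈ 𝒟, (d K * haar K x)^2)) :=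
    Real.continuous_sqrt.measurable.comp (measurable_Q 𝒟 d)
  have hbs : ∀ x, Real.sqrt (∑ K ∈ 𝒟, (d K * haar K x)^2)
      ≤ Real.sqrt (∑ K ∈ 𝒟, (d K)^2) := fun x => Real.sqrt_le_sqrt (Q_le 𝒟 d x)
  have habs : ∀ x, |Real.sqrt (∑ K ∈ 𝒟, (d K * haar K x)^2)| ≤ Real.sqrt (∑ K ∈ 𝒟, (d K)^2) :=
    fun x => by rw [abs_of_nonneg (Real.sqrt_nonneg _)]; exact hbs x
  have step3 : ∫ x, (∑ M ∈ 𝒟, d M * e M * (haar M x)^2) ∂μ0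
      ≤ ∫ x, Real.sqrt (∑ K ∈ 𝒟, (d K * haar K x)^2) ∂μ0 :=
    MeasureTheory.integral_mono (integrable_finset_sum _ fun M _ => hint M _)
      (integrable_of_bounded hms _ habs) step2
  have step4 := jensen hp hms (fun x => Real.sqrt_nonneg _) _ hbs
  have step5 : ∀ x : ℝ, Real.sqrt (∑ K ∈ 𝒟, (d K * haar K x)^2) ^ p
      = (∑ K ∈ 𝒟, (d K * haar K x)^2) ^ (p/2 : ℝ) := by
    intro x
    rw [Real.sqrt_eq_rpow, rpow_rpow (Q_nonneg 𝒟 d x)]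
    congr 1
    ring
  simp_rw [step5] at step4
  exact step3.trans (step4.trans_eq (by rw [Iq]))

/-- The self-improvement estimate for the case `1 ≤ p ≤ 2`. -/
lemma detK {B : Finset (ℕ×ℕ)} {p s C β : ℝ} (hp1 : 1 ≤ p) (hp2 : p ≤ 2) (hC : 0 ≤ C)
    (hβ0 : 0 ≤ β) {A : (ℕ×ℕ) → ℝ} (hs : s = ∑ i ∈ B, (A i)^2)
    (hw : ∀ i ∈ B, wK i ≤ β) (hw1 : ∑ i ∈ B, wK i ≤ 1)
    (hkey : s ≤ C * (∑ i ∈ B, |A i| ^ p * wK i) ^ (1/p : ℝ)) : s ≤ C^2 * β := by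
  have hs0 : 0 ≤ s := hs ▸ Finset.sum_nonneg fun i _ => sq_nonneg _
  have hp0 : (0:ℝ) < p := by linarith
  have hwnn : ∀ i ∈ B, (0:ℝ) ≤ wK i := fun i _ => (wK_pos i).le
  have hhold : ∑ i ∈ B, |A i| ^ p * wK i ≤ s ^ (p/2 : ℝ) * β ^ (p/2 : ℝ) := by
    rcases eq_or_lt_of_le hp2 with h2 | h2
    · subst h2
      have e1 : ∀ i ∈ B, |A i| ^ (2:ℝ) * wK i ≤ (A i)^2 * β := by
        intro i hi
        rw [rpow_two', sq_abs]
        exact mul_le_mul_of_nonneg_left (hw i hi) (sq_nonneg _)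
      calc ∑ i ∈ B, |A i| ^ (2:ℝ) * wK i ≤ ∑ i ∈ B, (A i)^2 * β := Finset.sum_le_sum e1
        _ = s * β := by rw [hs, Finset.sum_mul]
        _ = s ^ ((2:ℝ)/2) * β ^ ((2:ℝ)/2) := by
            norm_num
    · have h2p : (0:ℝ) < 2 - p := by linarith
      have hconj : (2/p : ℝ).HolderConjugate (2/(2-p)) := by
        rw [Real.holderConjugate_iff]
        constructor
        · rw [lt_div_iff₀ hp0]; linarith
        · rw [inv_div, inv_div]; ring
      have hH := Real.inner_le_Lp_mul_Lq B (fun i => |A i| ^ p) (fun i => wK i) hconj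
      have e1 : (∑ i ∈ B, (abs (|A i| ^ p)) ^ (2/p : ℝ)) = ∑ i ∈ B, (A i)^2 := by
        refine Finset.sum_congr rfl fun i _ => ?_
        rw [abs_of_nonneg (Real.rpow_nonneg (abs_nonneg _) _), rpow_rpow (abs_nonneg _),
          show p * (2/p) = (2:ℝ) by field_simp, rpow_two', sq_abs]
      have e2 : (∑ i ∈ B, |wK i| ^ (2/(2-p) : ℝ)) ≤ β ^ (p/(2-p) : ℝ) := by
        have e2' : ∀ i ∈ B, |wK i| ^ (2/(2-p) : ℝ) ≤ wK i * β ^ (p/(2-p) : ℝ) := by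
          intro i hi
          rw [abs_of_nonneg (hwnn i hi),
            show (2/(2-p) : ℝ) = 1 + p/(2-p) by field_simp; ring,
            Real.rpow_add_of_nonneg (hwnn i hi) zero_le_one
              (div_nonneg hp0.le h2p.le), Real.rpow_one]
          exact mul_le_mul_of_nonneg_left
            (Real.rpow_le_rpow (hwnn i hi) (hw i hi) (div_nonneg hp0.le h2p.le)) (hwnn i hi)
        calc ∑ i ∈ B, |wK i| ^ (2/(2-p) : ℝ) ≤ ∑ i ∈ B, wK i * β ^ (p/(2-p) : ℝ) :=
              Finset.sum_le_sum e2'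
          _ = (∑ i ∈ B, wK i) * β ^ (p/(2-p) : ℝ) := by rw [← Finset.sum_mul]
          _ ≤ 1 * β ^ (p/(2-p) : ℝ) :=
              mul_le_mul_of_nonneg_right hw1 (Real.rpow_nonneg hβ0 _)
          _ = β ^ (p/(2-p) : ℝ) := one_mul _
      calc ∑ i ∈ B, |A i| ^ p * wK i
          ≤ (∑ i ∈ B, (abs (|A i| ^ p)) ^ (2/p : ℝ)) ^ (1/(2/p) : ℝ)
            * (∑ i ∈ B, |wK i| ^ (2/(2-p) : ℝ)) ^ (1/(2/(2-p)) : ℝ) := hH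
        _ ≤ s ^ (1/(2/p) : ℝ) * (β ^ (p/(2-p) : ℝ)) ^ (1/(2/(2-p)) : ℝ) := by
            apply mul_le_mul
            · rw [e1, ← hs]
            · exact Real.rpow_le_rpow (Finset.sum_nonneg fun i _ =>
                Real.rpow_nonneg (abs_nonneg _) _) e2 (by positivity)
            · exact Real.rpow_nonneg (Finset.sum_nonneg fun i _ =>
                Real.rpow_nonneg (abs_nonneg _) _) _
            · exact Real.rpow_nonneg (hs ▸ Finset.sum_nonneg fun i _ => sq_nonneg _) _
        _ = s ^ (p/2 : ℝ) * β ^ (p/2 : ℝ) := by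
            rw [one_div_div, rpow_rpow hβ0, one_div_div,
              show (p/(2-p)) * ((2-p)/2) = p/2 by field_simp]
  have hkey2 : s ≤ C * Real.sqrt (s * β) := by
    refine hkey.trans ?_
    apply mul_le_mul_of_nonneg_left _ hC
    calc (∑ i ∈ B, |A i| ^ p * wK i) ^ (1/p : ℝ)
        ≤ (s ^ (p/2 : ℝ) * β ^ (p/2 : ℝ)) ^ (1/p : ℝ) := by
          apply Real.rpow_le_rpow _ hhold (by positivity)
          exact Finset.sum_nonneg fun i hi =>
            mul_nonneg (Real.rpow_nonneg (abs_nonneg _) _) (hwnn i hi)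
      _ = Real.sqrt (s * β) := by
          rw [← Real.mul_rpow hs0 hβ0, rpow_rpow (mul_nonneg hs0 hβ0),
            show (p/2) * (1/p) = (1/2 : ℝ) by field_simp, Real.sqrt_eq_rpow]
  rcases eq_or_lt_of_le hs0 with h0 | h0
  · rw [← h0]; positivity
  · have ht := Real.sq_sqrt (mul_nonneg hs0 hβ0)
    have h3 : s * s ≤ (C^2 * β) * s := by
      calc s * s ≤ (C * Real.sqrt (s * β)) * (C * Real.sqrt (s * β)) :=
            mul_self_le_mul_self hs0 hkey2
        _ = C^2 * (Real.sqrt (s*β) ^ 2) := by ring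
        _ = C^2 * (s * β) := by rw [ht]
        _ = (C^2 * β) * s := by ring
    exact le_of_mul_le_mul_right h3 h0

/-- The weighted Hölder estimate for the case `p ≥ 2`. -/
lemma detL {B : Finset (ℕ×ℕ)} {p C β : ℝ} (hp2 : 2 ≤ p) (hC : 0 ≤ C) (hβ0 : 0 ≤ β)
    {d : (ℕ×ℕ) → ℝ} (hw : ∀ i ∈ B, wK i ≤ β) (hw1 : ∑ i ∈ B, wK i ≤ 1)
    (hsum : ∑ L ∈ B, |d L| ^ p * wK L ≤ C ^ p) :
    ∑ L ∈ B, (d L * wK L) ^ 2 ≤ C^2 * β := by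
  have hwnn : ∀ i ∈ B, (0:ℝ) ≤ wK i := fun i _ => (wK_pos i).le
  have hp0 : (0:ℝ) < p := by linarith
  rcases eq_or_lt_of_le hp2 with h2 | h2
  · -- p = 2
    have e1 : ∀ L ∈ B, (d L * wK L)^2 ≤ (|d L| ^ p * wK L) * β := by
      intro L hL
      rw [← h2, rpow_two', sq_abs]
      have : (d L * wK L)^2 = ((d L)^2 * wK L) * wK L := by ring
      rw [this]
      exact mul_le_mul_of_nonneg_left (hw L hL)
        (mul_nonneg (sq_nonneg _) (hwnn L hL))
    calc ∑ L ∈ B, (d L * wK L)^2 ≤ ∑ L ∈ B, (|d L| ^ p * wK L) * β :=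
          Finset.sum_le_sum e1
      _ = (∑ L ∈ B, |d L| ^ p * wK L) * β := by rw [← Finset.sum_mul]
      _ ≤ C ^ p * β := mul_le_mul_of_nonneg_right hsum hβ0
      _ = C^2 * β := by rw [← h2, rpow_two' C]
  · -- p > 2
    have hps : (0:ℝ) < p - 2 := by linarith
    have hconj : (p/2 : ℝ).HolderConjugate ((p/2)/(p/2-1)) :=
      Real.HolderConjugate.conjExponent (by linarith)
    set q : ℝ := (p/2)/(p/2-1) with hqdef
    have hq_eq : q = p/(p-2) := by
      rw [hqdef]
      rw [div_eq_div_iff (by linarith) (by linarith)]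
      ring
    have hH := Real.inner_le_Lp_mul_Lq B (fun L => (d L)^2 * wK L ^ (2/p : ℝ))
      (fun L => wK L ^ (2 - 2/p : ℝ)) hconj
    have efg : ∀ L ∈ B, (d L * wK L)^2 = ((d L)^2 * wK L ^ (2/p : ℝ)) * wK L ^ (2 - 2/p : ℝ) := by
      intro L hL
      rw [mul_assoc, ← Real.rpow_add_of_nonneg (hwnn L hL) (by positivity) (by
        have : 2/p ≤ 1 := by rw [div_le_one hp0]; linarith
        linarith)]
      rw [show (2/p + (2 - 2/p) : ℝ) = 2 by ring, rpow_two']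
      ring
    have ef : ∀ L ∈ B, |(d L)^2 * wK L ^ (2/p : ℝ)| ^ (p/2 : ℝ) = |d L| ^ p * wK L := by
      intro L hL
      rw [abs_of_nonneg (mul_nonneg (sq_nonneg _) (Real.rpow_nonneg (hwnn L hL) _)),
        Real.mul_rpow (sq_nonneg _) (Real.rpow_nonneg (hwnn L hL) _),
        sq_rpow_half, rpow_rpow (hwnn L hL),
        show (2/p) * (p/2) = (1:ℝ) by field_simp, Real.rpow_one]
    have eg : (∑ L ∈ B, |wK L ^ (2 - 2/p : ℝ)| ^ q) ≤ β ^ (p/(p-2) : ℝ) := by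
      have eg' : ∀ L ∈ B, |wK L ^ (2 - 2/p : ℝ)| ^ q ≤ wK L * β ^ (p/(p-2) : ℝ) := by
        intro L hL
        rw [abs_of_nonneg (Real.rpow_nonneg (hwnn L hL) _), rpow_rpow (hwnn L hL), hq_eq,
          show (2 - 2/p) * (p/(p-2)) = 1 + p/(p-2) by field_simp; ring,
          Real.rpow_add_of_nonneg (hwnn L hL) zero_le_one (div_nonneg hp0.le hps.le),
          Real.rpow_one]
        exact mul_le_mul_of_nonneg_left
          (Real.rpow_le_rpow (hwnn L hL) (hw L hL) (div_nonneg hp0.le hps.le)) (hwnn L hL)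
      calc ∑ L ∈ B, |wK L ^ (2 - 2/p : ℝ)| ^ q ≤ ∑ L ∈ B, wK L * β ^ (p/(p-2) : ℝ) :=
            Finset.sum_le_sum eg'
        _ = (∑ L ∈ B, wK L) * β ^ (p/(p-2) : ℝ) := by rw [← Finset.sum_mul]
        _ ≤ 1 * β ^ (p/(p-2) : ℝ) :=
            mul_le_mul_of_nonneg_right hw1 (Real.rpow_nonneg hβ0 _)
        _ = β ^ (p/(p-2) : ℝ) := one_mul _
    have hq0 : (0:ℝ) < q := by rw [hq_eq]; positivity
    calc ∑ L ∈ B, (d L * wK L)^2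
        = ∑ L ∈ B, ((d L)^2 * wK L ^ (2/p : ℝ)) * wK L ^ (2 - 2/p : ℝ) :=
          Finset.sum_congr rfl efg
      _ ≤ (∑ L ∈ B, |(d L)^2 * wK L ^ (2/p : ℝ)| ^ (p/2 : ℝ)) ^ (1/(p/2) : ℝ)
          * (∑ L ∈ B, |wK L ^ (2 - 2/p : ℝ)| ^ q) ^ (1/q : ℝ) := hH
      _ ≤ (C ^ p) ^ (1/(p/2) : ℝ) * (β ^ (p/(p-2) : ℝ)) ^ (1/q : ℝ) := by
          apply mul_le_mul
          · apply Real.rpow_le_rpow (Finset.sum_nonneg fun L _ =>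
              Real.rpow_nonneg (abs_nonneg _) _) _ (by positivity)
            rw [Finset.sum_congr rfl ef]
            exact hsum
          · exact Real.rpow_le_rpow (Finset.sum_nonneg fun L _ =>
              Real.rpow_nonneg (abs_nonneg _) _) eg (by positivity)
          · exact Real.rpow_nonneg (Finset.sum_nonneg fun L _ =>
              Real.rpow_nonneg (abs_nonneg _) _) _
          · exact Real.rpow_nonneg (Real.rpow_nonneg hC _) _
      _ = C^2 * β := by
          rw [rpow_rpow hC, rpow_rpow hβ0, hq_eq,
            show p * (1/(p/2)) = (2:ℝ) by field_simp,
            show (p/(p-2)) * (1/(p/(p-2))) = (1:ℝ) by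
              rw [one_div, mul_inv_cancel₀ (by positivity)],
            Real.rpow_one, rpow_two']

end OffDiag
namespace OffDiag

section Prob

variable {Ω : Type*} [MeasurableSpace Ω] {P : Measure Ω} [IsProbabilityMeasure P]
variable {θ : ℕ × ℕ → Ω → ℝ}

lemma theta_ae (hmeas : ∀ K, Measurable (θ K))
    (hlaw : ∀ K, Measure.map (θ K) P
      = (2⁻¹ : ENNReal) • Measure.dirac (1 : ℝ) + (2⁻¹ : ENNReal) • Measure.dirac (-1 : ℝ))
    (K : ℕ × ℕ) : ∀ᵐ ω ∂P, θ K ω = 1 ∨ θ K ω = -1 := by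
  have hS : MeasurableSet ({1, -1} : Set ℝ) := (measurableSet_singleton (-1)).insert 1
  rw [ae_iff]
  have hset : {ω | ¬(θ K ω = 1 ∨ θ K ω = -1)} = θ K ⁻¹' (({1, -1} : Set ℝ)ᶜ) := by
    ext ω
    simp [Set.mem_preimage]
  rw [hset, ← Measure.map_apply (hmeas K) hS.compl, hlaw K]
  have h1 : (Measure.dirac (1:ℝ)) (({1, -1} : Set ℝ)ᶜ) = 0 := by
    rw [Measure.dirac_apply' _ hS.compl, Set.indicator_of_notMem]
    simp
  have h2 : (Measure.dirac (-1:ℝ)) (({1, -1} : Set ℝ)ᶜ) = 0 := by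
    rw [Measure.dirac_apply' _ hS.compl, Set.indicator_of_notMem]
    simp
  simp [h1, h2]

lemma integrable_theta_prod (hmeas : ∀ K, Measurable (θ K))
    (hlaw : ∀ K, Measure.map (θ K) P
      = (2⁻¹ : ENNReal) • Measure.dirac (1 : ℝ) + (2⁻¹ : ENNReal) • Measure.dirac (-1 : ℝ))
    (s : Finset (ℕ × ℕ)) : Integrable (fun ω => ∏ k ∈ s, θ k ω) P := by
  refine ⟨(Finset.measurable_prod s fun k _ => hmeas k).aestronglyMeasurable, ?_⟩
  apply MeasureTheory.HasFiniteIntegral.of_bounded (C := (1:ℝ))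
  have hall : ∀ᵐ ω ∂P, ∀ k ∈ s, θ k ω = 1 ∨ θ k ω = -1 :=
    (MeasureTheory.ae_ball_iff s.countable_toSet).mpr fun k _ => theta_ae hmeas hlaw k
  filter_upwards [hall] with ω hω
  rw [Real.norm_eq_abs, Finset.abs_prod]
  have e : ∏ k ∈ s, |θ k ω| = ∏ k ∈ s, 1 := Finset.prod_congr rfl fun k hk => by
    rcases hω k hk with h | h <;> rw [h] <;> norm_num
  rw [e, Finset.prod_const_one]

lemma integrable_theta (hmeas : ∀ K, Measurable (θ K))
    (hlaw : ∀ K, Measure.map (θ K) P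
      = (2⁻¹ : ENNReal) • Measure.dirac (1 : ℝ) + (2⁻¹ : ENNReal) • Measure.dirac (-1 : ℝ))
    (K : ℕ × ℕ) : Integrable (θ K) P := by
  have h := integrable_theta_prod hmeas hlaw {K}
  simpa using h

lemma integral_theta (hmeas : ∀ K, Measurable (θ K))
    (hlaw : ∀ K, Measure.map (θ K) P
      = (2⁻¹ : ENNReal) • Measure.dirac (1 : ℝ) + (2⁻¹ : ENNReal) • Measure.dirac (-1 : ℝ))
    (K : ℕ × ℕ) : ∫ ω, θ K ω ∂P = 0 := by
  have hid : ∀ a : ℝ, Integrable (fun x : ℝ => x) (Measure.dirac a) := fun a =>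
    ⟨measurable_id.aestronglyMeasurable, by
      simp [MeasureTheory.HasFiniteIntegral, lintegral_dirac]⟩
  have h1 : ∫ ω, θ K ω ∂P = ∫ x, x ∂(Measure.map (θ K) P) :=
    (MeasureTheory.integral_map (hmeas K).aemeasurable aestronglyMeasurable_id).symm
  rw [h1, hlaw K,
    MeasureTheory.integral_add_measure
      ((hid 1).smul_measure (by norm_num)) ((hid (-1)).smul_measure (by norm_num)),
    MeasureTheory.integral_smul_measure, MeasureTheory.integral_smul_measure,
    MeasureTheory.integral_dirac, MeasureTheory.integral_dirac]
  norm_num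

lemma moment2 (hmeas : ∀ K, Measurable (θ K))
    (hlaw : ∀ K, Measure.map (θ K) P
      = (2⁻¹ : ENNReal) • Measure.dirac (1 : ℝ) + (2⁻¹ : ENNReal) • Measure.dirac (-1 : ℝ))
    (hindep : iIndepFun θ P)
    (i i' : ℕ × ℕ) : ∫ ω, θ i ω * θ i' ω ∂P = if i = i' then 1 else 0 := by
  by_cases h : i = i'
  · subst h
    rw [if_pos rfl]
    have hae : ∀ᵐ ω ∂P, θ i ω * θ i ω = 1 := by
      filter_upwards [theta_ae hmeas hlaw i] with ω hω
      rcases hω with h | h <;> rw [h] <;> norm_num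
    rw [MeasureTheory.integral_congr_ae hae]
    simp
  · rw [if_neg h]
    have hIF : ProbabilityTheory.IndepFun (θ i) (θ i') P := hindep.indepFun h
    have := hIF.integral_mul_eq_mul_integral (integrable_theta hmeas hlaw i).aestronglyMeasurable
      (integrable_theta hmeas hlaw i').aestronglyMeasurable
    have e : ∫ ω, θ i ω * θ i' ω ∂P = ∫ ω, (θ i * θ i') ω ∂P := rfl
    rw [e]
    rw [show (∫ ω, (θ i * θ i') ω ∂P) = MeasureTheory.integral P (θ i * θ i') from rfl, this,
      integral_theta hmeas hlaw i, zero_mul]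

lemma expectation_mul_prod_eq_zero (hmeas : ∀ K, Measurable (θ K))
    (hlaw : ∀ K, Measure.map (θ K) P
      = (2⁻¹ : ENNReal) • Measure.dirac (1 : ℝ) + (2⁻¹ : ENNReal) • Measure.dirac (-1 : ℝ))
    (hindep : iIndepFun θ P)
    {j : ℕ × ℕ} {s : Finset (ℕ × ℕ)} (hj : j ∉ s) :
    ∫ ω, θ j ω * ∏ k ∈ s, θ k ω ∂P = 0 := by
  have hIF := hindep.indepFun_finset_prod_of_notMem hmeas hj
  have eprod : (∏ k ∈ s, θ k) = fun ω => ∏ k ∈ s, θ k ω :=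
    funext fun ω => Finset.prod_apply ω s θ
  have hint : Integrable (∏ k ∈ s, θ k) P := by
    rw [eprod]; exact integrable_theta_prod hmeas hlaw s
  have h := hIF.integral_mul_eq_mul_integral hint.aestronglyMeasurable
    (integrable_theta hmeas hlaw j).aestronglyMeasurable
  have e : ∫ ω, θ j ω * ∏ k ∈ s, θ k ω ∂P
      = MeasureTheory.integral P ((∏ k ∈ s, θ k) * θ j) := by
    apply MeasureTheory.integral_congr_ae
    apply Filter.Eventually.of_forall
    intro ω
    simp [Finset.prod_apply]
    ring
  rw [e, h, integral_theta hmeas hlaw j, mul_zero]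

lemma moment4 (hmeas : ∀ K, Measurable (θ K))
    (hlaw : ∀ K, Measure.map (θ K) P
      = (2⁻¹ : ENNReal) • Measure.dirac (1 : ℝ) + (2⁻¹ : ENNReal) • Measure.dirac (-1 : ℝ))
    (hindep : iIndepFun θ P)
    {BI BI' : Finset (ℕ × ℕ)} (hdisjColl : Disjoint BI BI')
    {i i' J J' : ℕ × ℕ} (hi : i ∈ BI) (hi' : i' ∈ BI) (hJ : J ∈ BI') (hJ' : J' ∈ BI') :
    ∫ ω, θ i ω * θ J ω * (θ i' ω * θ J' ω) ∂P
      = if i = i' ∧ J = J' then 1 else 0 := by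
  have hiJ : i ≠ J := fun h => (Finset.disjoint_left.mp hdisjColl hi) (h ▸ hJ)
  have hiJ' : i ≠ J' := fun h => (Finset.disjoint_left.mp hdisjColl hi) (h ▸ hJ')
  have hi'J : i' ≠ J := fun h => (Finset.disjoint_left.mp hdisjColl hi') (h ▸ hJ)
  have hi'J' : i' ≠ J' := fun h => (Finset.disjoint_left.mp hdisjColl hi') (h ▸ hJ')
  by_cases hii : i = i'
  · by_cases hJJ : J = J'
    · subst hii; subst hJJ
      rw [if_pos ⟨rfl, rfl⟩]
      have hae : ∀ᵐ ω ∂P, θ i ω * θ J ω * (θ i ω * θ J ω) = 1 := by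
        filter_upwards [theta_ae hmeas hlaw i, theta_ae hmeas hlaw J] with ω h1 h2
        rcases h1 with h1 | h1 <;> rcases h2 with h2 | h2 <;> rw [h1, h2] <;> norm_num
      rw [MeasureTheory.integral_congr_ae hae]
      simp
    · subst hii
      rw [if_neg (fun hc => hJJ hc.2)]
      have hae : ∀ᵐ ω ∂P, θ i ω * θ J ω * (θ i ω * θ J' ω) = θ J ω * θ J' ω := by
        filter_upwards [theta_ae hmeas hlaw i] with ω h1
        rcases h1 with h1 | h1 <;> rw [h1] <;> ring
      rw [MeasureTheory.integral_congr_ae hae, moment2 hmeas hlaw hindep J J', if_neg hJJ]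
  · by_cases hJJ : J = J'
    · subst hJJ
      rw [if_neg (fun hc => hii hc.1)]
      have hae : ∀ᵐ ω ∂P, θ i ω * θ J ω * (θ i' ω * θ J ω) = θ i ω * θ i' ω := by
        filter_upwards [theta_ae hmeas hlaw J] with ω h1
        rcases h1 with h1 | h1 <;> rw [h1] <;> ring
      rw [MeasureTheory.integral_congr_ae hae, moment2 hmeas hlaw hindep i i', if_neg hii]
    · rw [if_neg (fun hc => hii hc.1)]
      have hnot : i ∉ ({J, i', J'} : Finset (ℕ × ℕ)) := by
        simp only [Finset.mem_insert, Finset.mem_singleton]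
        push_neg
        exact ⟨hiJ, hii, hiJ'⟩
      have hprod : ∀ ω, θ i ω * θ J ω * (θ i' ω * θ J' ω)
          = θ i ω * ∏ k ∈ ({J, i', J'} : Finset (ℕ × ℕ)), θ k ω := by
        intro ω
        rw [Finset.prod_insert (by
            simp only [Finset.mem_insert, Finset.mem_singleton]
            push_neg
            exact ⟨Ne.symm hi'J, hJJ⟩),
          Finset.prod_insert (by
            simp only [Finset.mem_singleton]
            exact hi'J'),
          Finset.prod_singleton]
        ring
      simp_rw [hprod]
      exact expectation_mul_prod_eq_zero hmeas hlaw hindep hnot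

end Prob

end OffDiag
namespace OffDiag

lemma ite_vec_eq (B : Finset (ℕ × ℕ)) (c : (ℕ × ℕ) → ℝ) :
    (fun K => if K ∈ B then c K else 0) = ∑ i ∈ B, c i • es i := by
  funext K
  rw [Finset.sum_apply]
  simp only [Pi.smul_apply, smul_eq_mul, es]
  simp_rw [mul_ite, mul_one, mul_zero]
  rw [Finset.sum_ite_eq B K c]

lemma haarFn_sum (𝒟 : Finset (ℕ × ℕ)) {s : Finset (ℕ × ℕ)} (a : (ℕ × ℕ) → ℝ)
    (v : (ℕ × ℕ) → (ℕ × ℕ) → ℝ) (x : ℝ) :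
    haarFn 𝒟 (∑ i ∈ s, a i • v i) x = ∑ i ∈ s, a i * haarFn 𝒟 (v i) x := by
  unfold haarFn
  have e : ∀ M, (∑ i ∈ s, a i • v i) M * haar M x = ∑ i ∈ s, a i * (v i M * haar M x) := by
    intro M
    rw [Finset.sum_apply, Finset.sum_mul]
    exact Finset.sum_congr rfl fun i _ => by simp [mul_assoc]
  simp_rw [e]
  rw [Finset.sum_comm]
  exact Finset.sum_congr rfl fun i _ => by rw [Finset.mul_sum]

lemma wK_eq_volume {K : ℕ × ℕ} (hK : IsDyadic K) : (volume (dyadicSet K)).toReal = wK K := by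
  obtain ⟨_, _, c3, c4⟩ := dyadic_facts hK
  have hpos : (0:ℝ) < 2 ^ K.1 := by positivity
  have e : dyadicSet K = Set.Ico ((K.2 - 1 : ℝ) / 2 ^ K.1) ((K.2 : ℝ) / 2 ^ K.1) := rfl
  rw [e, Real.volume_Ico, ENNReal.toReal_ofReal (by
    rw [div_sub_div_same, show ((K.2:ℝ) - ((K.2:ℝ) - 1)) = 1 by ring]
    positivity)]
  rw [wK, div_sub_div_same, show ((K.2:ℝ) - ((K.2:ℝ) - 1)) = 1 by ring, one_div]

lemma min_le_rpow_half {α : ℝ} (hα : 0 ≤ α) : min α 1 ≤ α ^ ((1:ℝ)/2) := by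
  rcases le_total α 1 with h | h
  · rw [min_eq_left h]
    rcases eq_or_lt_of_le hα with h0 | h0
    · rw [← h0, Real.zero_rpow (by norm_num)]
    · calc α = α ^ (1:ℝ) := (Real.rpow_one α).symm
        _ ≤ α ^ ((1:ℝ)/2) := Real.rpow_le_rpow_of_exponent_ge h0 h (by norm_num)
  · rw [min_eq_right h]
    calc (1:ℝ) = 1 ^ ((1:ℝ)/2) := (Real.one_rpow _).symm
      _ ≤ α ^ ((1:ℝ)/2) := Real.rpow_le_rpow zero_le_one h (by norm_num)

section Prob2

variable {Ω : Type*} [MeasurableSpace Ω] {P : Measure Ω} [IsProbabilityMeasure P]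
variable {θ : ℕ × ℕ → Ω → ℝ}

lemma integrable_const_mul_theta2
    (hmeas : ∀ K, Measurable (θ K))
    (hlaw : ∀ K, Measure.map (θ K) P
      = (2⁻¹ : ENNReal) • Measure.dirac (1 : ℝ) + (2⁻¹ : ENNReal) • Measure.dirac (-1 : ℝ))
    (a : ℝ) (k k' : ℕ × ℕ) : Integrable (fun ω => a * (θ k ω * θ k' ω)) P := by
  refine ⟨(measurable_const.mul ((hmeas k).mul (hmeas k'))).aestronglyMeasurable, ?_⟩
  apply MeasureTheory.HasFiniteIntegral.of_bounded (C := |a|)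
  filter_upwards [theta_ae hmeas hlaw k, theta_ae hmeas hlaw k'] with ω h1 h2
  rw [Real.norm_eq_abs, abs_mul, abs_mul]
  rcases h1 with h1 | h1 <;> rcases h2 with h2 | h2 <;> rw [h1, h2] <;> norm_num

lemma integrable_const_mul_theta4
    (hmeas : ∀ K, Measurable (θ K))
    (hlaw : ∀ K, Measure.map (θ K) P
      = (2⁻¹ : ENNReal) • Measure.dirac (1 : ℝ) + (2⁻¹ : ENNReal) • Measure.dirac (-1 : ℝ))
    (a : ℝ) (i J i' J' : ℕ × ℕ) :
    Integrable (fun ω => a * (θ i ω * θ J ω * (θ i' ω * θ J' ω))) P := by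
  refine ⟨(measurable_const.mul ((((hmeas i).mul (hmeas J)).mul
    ((hmeas i').mul (hmeas J'))))).aestronglyMeasurable, ?_⟩
  apply MeasureTheory.HasFiniteIntegral.of_bounded (C := |a|)
  filter_upwards [theta_ae hmeas hlaw i, theta_ae hmeas hlaw J, theta_ae hmeas hlaw i',
    theta_ae hmeas hlaw J'] with ω h1 h2 h3 h4
  rw [Real.norm_eq_abs]
  rcases h1 with h1 | h1 <;> rcases h2 with h2 | h2 <;> rcases h3 with h3 | h3 <;>
    rcases h4 with h4 | h4 <;> rw [h1, h2, h3, h4] <;> norm_num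

/-- Second moment of a Rademacher sum. -/
lemma exp_sq (hmeas : ∀ K, Measurable (θ K))
    (hlaw : ∀ K, Measure.map (θ K) P
      = (2⁻¹ : ENNReal) • Measure.dirac (1 : ℝ) + (2⁻¹ : ENNReal) • Measure.dirac (-1 : ℝ))
    (hindep : iIndepFun θ P)
    (B : Finset (ℕ × ℕ)) (v : (ℕ × ℕ) → ℝ) :
    ∫ ω, (∑ k ∈ B, θ k ω * v k)^2 ∂P = ∑ k ∈ B, (v k)^2 := by
  have e1 : ∀ ω, (∑ k ∈ B, θ k ω * v k)^2
      = ∑ k ∈ B, ∑ k' ∈ B, (v k * v k') * (θ k ω * θ k' ω) := by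
    intro ω
    rw [sq, Finset.sum_mul_sum]
    exact Finset.sum_congr rfl fun k _ => Finset.sum_congr rfl fun k' _ => by ring
  simp_rw [e1]
  rw [MeasureTheory.integral_finset_sum _ (fun k _ => integrable_finset_sum _
    (fun k' _ => integrable_const_mul_theta2 hmeas hlaw _ k k'))]
  refine Finset.sum_congr rfl fun k hk => ?_
  rw [MeasureTheory.integral_finset_sum _
    (fun k' _ => integrable_const_mul_theta2 hmeas hlaw _ k k')]
  rw [Finset.sum_eq_single_of_mem k hk]
  · rw [MeasureTheory.integral_const_mul, moment2 hmeas hlaw hindep k k, if_pos rfl, mul_one, sq]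
  · intro k' _ hne
    rw [MeasureTheory.integral_const_mul, moment2 hmeas hlaw hindep k k',
      if_neg (Ne.symm hne), mul_zero]

lemma integrable_sq_sum (hmeas : ∀ K, Measurable (θ K))
    (hlaw : ∀ K, Measure.map (θ K) P
      = (2⁻¹ : ENNReal) • Measure.dirac (1 : ℝ) + (2⁻¹ : ENNReal) • Measure.dirac (-1 : ℝ))
    (B : Finset (ℕ × ℕ)) (v : (ℕ × ℕ) → ℝ) :
    Integrable (fun ω => (∑ k ∈ B, θ k ω * v k)^2) P := by
  refine ⟨((Finset.measurable_sum B fun k _ => (hmeas k).mul measurable_const).pow_const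
    2).aestronglyMeasurable, ?_⟩
  apply MeasureTheory.HasFiniteIntegral.of_bounded (C := (∑ k ∈ B, |v k|)^2)
  have hall : ∀ᵐ ω ∂P, ∀ k ∈ B, θ k ω = 1 ∨ θ k ω = -1 :=
    (MeasureTheory.ae_ball_iff B.countable_toSet).mpr fun k _ => theta_ae hmeas hlaw k
  filter_upwards [hall] with ω hω
  rw [Real.norm_eq_abs, abs_pow, sq_abs]
  have habs : |∑ k ∈ B, θ k ω * v k| ≤ ∑ k ∈ B, |v k| := by
    refine (Finset.abs_sum_le_sum_abs _ _).trans (Finset.sum_le_sum fun k hk => ?_)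
    rw [abs_mul]
    rcases hω k hk with h | h <;> rw [h] <;> norm_num
  calc (∑ k ∈ B, θ k ω * v k)^2 = |∑ k ∈ B, θ k ω * v k|^2 := (sq_abs _).symm
    _ ≤ (∑ k ∈ B, |v k|)^2 := by
        apply pow_le_pow_left₀ (abs_nonneg _) habs

end Prob2

end OffDiag
namespace OffDiag

section Expand

variable {𝒟 : Finset (ℕ × ℕ)}

lemma T_ite (T : ((ℕ×ℕ)→ℝ) →ₗ[ℝ] ((ℕ×ℕ)→ℝ)) (B : Finset (ℕ×ℕ)) (b : (ℕ×ℕ)→ℝ) :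
    T (fun K => if K ∈ B then b K else 0) = ∑ i ∈ B, b i • T (es i) := by
  rw [ite_vec_eq B b, map_sum]
  exact Finset.sum_congr rfl fun i _ => T.map_smul _ _

lemma integral_sum_smul_mul_haar (s : Finset (ℕ×ℕ)) (b : (ℕ×ℕ) → ℝ)
    (v : (ℕ×ℕ) → (ℕ×ℕ) → ℝ) (J : ℕ×ℕ) :
    ∫ x, haarFn 𝒟 (∑ i ∈ s, b i • v i) x * haar J x ∂μ0
      = ∑ i ∈ s, b i * ∫ x, haarFn 𝒟 (v i) x * haar J x ∂μ0 := by
  have e : ∀ x, haarFn 𝒟 (∑ i ∈ s, b i • v i) x * haar J x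
      = ∑ i ∈ s, b i * (haarFn 𝒟 (v i) x * haar J x) := by
    intro x
    rw [haarFn_sum, Finset.sum_mul]
    exact Finset.sum_congr rfl fun i _ => by ring
  simp_rw [e]
  rw [MeasureTheory.integral_finset_sum _
    (fun i _ => (integrable_haarFn_mul_haar 𝒟 (v i) J).const_mul (b i))]
  exact Finset.sum_congr rfl fun i _ => MeasureTheory.integral_const_mul _ _

lemma integral_sum_smul_mul_haarFn (s : Finset (ℕ×ℕ)) (b : (ℕ×ℕ) → ℝ)
    (v : (ℕ×ℕ) → (ℕ×ℕ) → ℝ) (g : (ℕ×ℕ) → ℝ) :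
    ∫ x, haarFn 𝒟 (∑ i ∈ s, b i • v i) x * haarFn 𝒟 g x ∂μ0
      = ∑ i ∈ s, b i * ∫ x, haarFn 𝒟 (v i) x * haarFn 𝒟 g x ∂μ0 := by
  have e : ∀ x, haarFn 𝒟 (∑ i ∈ s, b i • v i) x * haarFn 𝒟 g x
      = ∑ i ∈ s, b i * (haarFn 𝒟 (v i) x * haarFn 𝒟 g x) := by
    intro x
    rw [haarFn_sum, Finset.sum_mul]
    exact Finset.sum_congr rfl fun i _ => by ring
  simp_rw [e]
  rw [MeasureTheory.integral_finset_sum _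
    (fun i _ => (integrable_haarFn_mul 𝒟 (v i) g).const_mul (b i))]
  exact Finset.sum_congr rfl fun i _ => MeasureTheory.integral_const_mul _ _

lemma integral_haarFn_mul_ite {B : Finset (ℕ×ℕ)} (hB : B ⊆ 𝒟) (c : (ℕ×ℕ) → ℝ)
    (b : (ℕ×ℕ) → ℝ) :
    ∫ x, haarFn 𝒟 c x * haarFn 𝒟 (fun K => if K ∈ B then b K else 0) x ∂μ0
      = ∑ J ∈ B, b J * ∫ x, haarFn 𝒟 c x * haar J x ∂μ0 := by
  have e : ∀ x, haarFn 𝒟 c x * haarFn 𝒟 (fun K => if K ∈ B then b K else 0) x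
      = ∑ J ∈ B, b J * (haarFn 𝒟 c x * haar J x) := by
    intro x
    rw [ite_vec_eq B b, haarFn_sum, Finset.mul_sum]
    refine Finset.sum_congr rfl fun J hJ => ?_
    rw [haarFn_es (hB hJ)]
    ring
  simp_rw [e]
  rw [MeasureTheory.integral_finset_sum _
    (fun J _ => (integrable_haarFn_mul_haar 𝒟 c J).const_mul (b J))]
  exact Finset.sum_congr rfl fun J _ => MeasureTheory.integral_const_mul _ _

end Expand

end OffDiag

open OffDiag in
/-- Let `T` be a linear operator on the Haar span (acting on coefficient vectors over a finite
dyadic index set `𝒟`) with `H^p` operator norm at most `C` (`1 ≤ p < ∞`). Let `B_I, B_{I'} ⊆ 𝒟`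
be disjoint collections of pairwise disjoint dyadic intervals, each interval of measure at most
`α`. For independent Rademacher signs `θ`, set `b_I^θ = Σ_{K∈B_I} θ_K h_K` and
`Y(θ) = ⟨T b_I^θ, b_{I'}^θ⟩ = ∫₀¹ (T b_I^θ)(x) b_{I'}^θ(x) dx`. Then `E[Y²] ≤ C² α^{1/2}`. -/
theorem offdiagonal_second_moment {Ω : Type*} [MeasurableSpace Ω]
    (P : Measure Ω) [IsProbabilityMeasure P]
    (θ : ℕ × ℕ → Ω → ℝ) (hmeas : ∀ K, Measurable (θ K))
    (hindep : iIndepFun θ P)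
    (hlaw : ∀ K, Measure.map (θ K) P
      = (2⁻¹ : ENNReal) • Measure.dirac (1 : ℝ) + (2⁻¹ : ENNReal) • Measure.dirac (-1 : ℝ))
    (𝒟 : Finset (ℕ × ℕ)) (h𝒟 : ∀ K ∈ 𝒟, IsDyadic K)
    (p : ℝ) (hp : 1 ≤ p)
    (T : ((ℕ × ℕ) → ℝ) →ₗ[ℝ] ((ℕ × ℕ) → ℝ)) (C : ℝ) (hC : 0 ≤ C)
    (hT : ∀ c, HpNorm 𝒟 p (T c) ≤ C * HpNorm 𝒟 p c)
    (BI BI' : Finset (ℕ × ℕ)) (hBI : BI ⊆ 𝒟) (hBI' : BI' ⊆ 𝒟)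
    (hdisjColl : Disjoint BI BI')
    (hdisjI : (BI : Set (ℕ × ℕ)).Pairwise fun K L => Disjoint (dyadicSet K) (dyadicSet L))
    (hdisjI' : (BI' : Set (ℕ × ℕ)).Pairwise fun K L => Disjoint (dyadicSet K) (dyadicSet L))
    (α : ℝ) (hα : 0 ≤ α)
    (hsmall : ∀ K ∈ BI ∪ BI', (volume (dyadicSet K)).toReal ≤ α) :
    (∫ ω, (∫ x in (0:ℝ)..1,
        haarFn 𝒟 (T (fun K => if K ∈ BI then θ K ω else 0)) x
          * haarFn 𝒟 (fun K => if K ∈ BI' then θ K ω else 0) x) ^ 2 ∂P)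
      ≤ C ^ 2 * α ^ ((1:ℝ)/2) := by
  classical
  have hp0 : (0:ℝ) < p := by linarith
  set β : ℝ := min α 1 with hβdef
  have hβ0 : 0 ≤ β := le_min hα zero_le_one
  have hPD : PD BI := hdisjI
  have hPD' : PD BI' := hdisjI'
  -- interval sizes
  have hwβ : ∀ K ∈ BI ∪ BI', wK K ≤ β := by
    intro K hK
    have hKD : K ∈ 𝒟 := by
      rcases Finset.mem_union.mp hK with h | h
      · exact hBI h
      · exact hBI' h
    have := hsmall K hK
    rw [wK_eq_volume (h𝒟 K hKD)] at this
    exact le_min this (wK_le_one K)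
  have hwBI : ∀ i ∈ BI, wK i ≤ β := fun i hi => hwβ i (Finset.mem_union_left _ hi)
  have hwBI' : ∀ J ∈ BI', wK J ≤ β := fun J hJ => hwβ J (Finset.mem_union_right _ hJ)
  have hw1BI : ∑ i ∈ BI, wK i ≤ 1 := sum_wK_le_one h𝒟 hBI hPD
  have hw1BI' : ∑ J ∈ BI', wK J ≤ 1 := sum_wK_le_one h𝒟 hBI' hPD'
  -- the matrix
  set t : (ℕ×ℕ) → (ℕ×ℕ) → ℝ :=
    fun i J => ∫ x, haarFn 𝒟 (T (es i)) x * haar J x ∂μ0 with htdef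
  -- pointwise expansion of Y
  have hY : ∀ ω, (∫ x in (0:ℝ)..1,
      haarFn 𝒟 (T (fun K => if K ∈ BI then θ K ω else 0)) x
        * haarFn 𝒟 (fun K => if K ∈ BI' then θ K ω else 0) x)
      = ∑ z ∈ BI' ×ˢ BI, t z.2 z.1 * (θ z.2 ω * θ z.1 ω) := by
    intro ω
    rw [intervalIntegral_eq, integral_haarFn_mul_ite hBI' _ (fun K => θ K ω)]
    rw [Finset.sum_congr rfl (fun J _ => by
      rw [T_ite T BI (fun K => θ K ω), integral_sum_smul_mul_haar])]
    rw [Finset.sum_product]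
    refine Finset.sum_congr rfl fun J _ => ?_
    rw [Finset.mul_sum]
    refine Finset.sum_congr rfl fun i _ => ?_
    ring
  -- second moment identity
  have hE : (∫ ω, (∫ x in (0:ℝ)..1,
      haarFn 𝒟 (T (fun K => if K ∈ BI then θ K ω else 0)) x
        * haarFn 𝒟 (fun K => if K ∈ BI' then θ K ω else 0) x) ^ 2 ∂P)
      = ∑ z ∈ BI' ×ˢ BI, (t z.2 z.1)^2 := by
    have e1 : ∀ ω, (∫ x in (0:ℝ)..1,
        haarFn 𝒟 (T (fun K => if K ∈ BI then θ K ω else 0)) x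
          * haarFn 𝒟 (fun K => if K ∈ BI' then θ K ω else 0) x) ^ 2
        = ∑ z ∈ BI' ×ˢ BI, ∑ z' ∈ BI' ×ˢ BI, (t z.2 z.1 * t z'.2 z'.1)
            * (θ z.2 ω * θ z.1 ω * (θ z'.2 ω * θ z'.1 ω)) := by
      intro ω
      rw [hY ω, sq, Finset.sum_mul_sum]
      exact Finset.sum_congr rfl fun z _ => Finset.sum_congr rfl fun z' _ => by ring
    calc (∫ ω, (∫ x in (0:ℝ)..1,
        haarFn 𝒟 (T (fun K => if K ∈ BI then θ K ω else 0)) x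
          * haarFn 𝒟 (fun K => if K ∈ BI' then θ K ω else 0) x) ^ 2 ∂P)
        = ∫ ω, (∑ z ∈ BI' ×ˢ BI, ∑ z' ∈ BI' ×ˢ BI, (t z.2 z.1 * t z'.2 z'.1)
            * (θ z.2 ω * θ z.1 ω * (θ z'.2 ω * θ z'.1 ω))) ∂P :=
          MeasureTheory.integral_congr_ae (Filter.Eventually.of_forall e1)
      _ = ∑ z ∈ BI' ×ˢ BI, (t z.2 z.1)^2 := by
          rw [MeasureTheory.integral_finset_sum _ (fun z _ => integrable_finset_sum _
            (fun z' _ => integrable_const_mul_theta4 hmeas hlaw _ _ _ _ _))]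
          refine Finset.sum_congr rfl fun z hz => ?_
          rw [MeasureTheory.integral_finset_sum _
            (fun z' _ => integrable_const_mul_theta4 hmeas hlaw _ _ _ _ _)]
          obtain ⟨hz1, hz2⟩ := Finset.mem_product.mp hz
          rw [Finset.sum_eq_single_of_mem z hz]
          · rw [MeasureTheory.integral_const_mul,
              moment4 hmeas hlaw hindep hdisjColl hz2 hz2 hz1 hz1, if_pos ⟨rfl, rfl⟩,
              mul_one, sq]
          · intro z' hz' hne
            obtain ⟨hz'1, hz'2⟩ := Finset.mem_product.mp hz'
            rw [MeasureTheory.integral_const_mul,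
              moment4 hmeas hlaw hindep hdisjColl hz2 hz'2 hz1 hz'1,
              if_neg (fun hc => hne (Prod.ext hc.2 hc.1).symm), mul_zero]
  rw [hE, Finset.sum_product]
  -- now: ∑ J ∈ BI', ∑ i ∈ BI, (t i J)^2 ≤ C^2 * β ≤ C^2 * α^(1/2)
  have hgood : ∀ᵐ ω ∂P, ∀ K ∈ BI ∪ BI', θ K ω = 1 ∨ θ K ω = -1 :=
    (MeasureTheory.ae_ball_iff (BI ∪ BI').countable_toSet).mpr
      fun K _ => theta_ae hmeas hlaw K
  have hconst : (∫ _ : Ω, C^2 * β ∂P) = C^2 * β := by simp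
  have hmain : ∑ J ∈ BI', ∑ i ∈ BI, (t i J)^2 ≤ C^2 * β := by
    rcases le_total p 2 with hple | hpge
    · -- K-side, 1 ≤ p ≤ 2
      have hswap : ∑ J ∈ BI', ∑ i ∈ BI, (t i J)^2 = ∑ i ∈ BI, ∑ J ∈ BI', (t i J)^2 :=
        Finset.sum_comm
      rw [hswap]
      have hm2 : ∀ i, (∫ ω, (∑ J ∈ BI', θ J ω * t i J)^2 ∂P) = ∑ J ∈ BI', (t i J)^2 :=
        fun i => exp_sq hmeas hlaw hindep BI' (fun J => t i J)
      have hsum2 : ∑ i ∈ BI, ∑ J ∈ BI', (t i J)^2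
          = ∫ ω, (∑ i ∈ BI, (∑ J ∈ BI', θ J ω * t i J)^2) ∂P := by
        rw [MeasureTheory.integral_finset_sum _
          (fun i _ => integrable_sq_sum hmeas hlaw BI' (fun J => t i J))]
        exact (Finset.sum_congr rfl fun i _ => (hm2 i).symm)
      rw [hsum2]
      have hae : ∀ᵐ ω ∂P, (∑ i ∈ BI, (∑ J ∈ BI', θ J ω * t i J)^2) ≤ C^2 * β := by
        filter_upwards [hgood] with ω hω
        -- deterministic bound, K-side
        set ev : (ℕ×ℕ) → ℝ := fun K => if K ∈ BI' then θ K ω else 0 with hevdef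
        have hesupp : ∀ M, M ∉ BI' → ev M = 0 := fun M h => if_neg h
        have heabs : ∀ M ∈ BI', |ev M| = 1 := by
          intro M hM
          rw [hevdef]
          simp only
          rw [if_pos hM]
          rcases hω M (Finset.mem_union_right _ hM) with h | h <;> rw [h] <;> norm_num
        have heQ : ∀ x, ∑ K ∈ 𝒟, (ev K * haar K x)^2 ≤ 1 :=
          Q_sign_le_one hBI' hPD' hesupp heabs
        have hAeq : ∀ i : ℕ×ℕ, (∑ J ∈ BI', θ J ω * t i J)
            = ∫ x, haarFn 𝒟 (T (es i)) x * haarFn 𝒟 ev x ∂μ0 := by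
          intro i
          rw [hevdef, integral_haarFn_mul_ite hBI' _ (fun K => θ K ω)]
        set A : (ℕ×ℕ) → ℝ := fun M => ∑ J ∈ BI', θ J ω * t M J with hAdef
        set aA : (ℕ×ℕ) → ℝ := fun M => if M ∈ BI then A M else 0 with haAdef
        have haAsupp : ∀ M, M ∉ BI → aA M = 0 := fun M h => if_neg h
        have hIqaA : Iq 𝒟 p aA = ∑ i ∈ BI, |A i| ^ p * wK i := by
          rw [Iq]
          rw [show (fun x => (∑ K ∈ 𝒟, (aA K * haar K x) ^ 2) ^ (p/2))
            = fun x => ∑ L ∈ BI, |aA L| ^ p * (dyadicSet L).indicator (1 : ℝ → ℝ) x from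
            funext (Qp_eq_sum_ind hp0 hBI hPD haAsupp)]
          rw [integral_sum_ind h𝒟 hBI]
          refine Finset.sum_congr rfl fun i hi => ?_
          rw [haAdef]
          simp only
          rw [if_pos hi]
        have hs2 : ∑ i ∈ BI, (A i)^2 = ∑ M ∈ 𝒟, (T aA) M * ev M * wK M := by
          rw [← pairing h𝒟 (T aA) ev, haAdef, T_ite T BI A,
            integral_sum_smul_mul_haarFn]
          exact Finset.sum_congr rfl fun i _ => by rw [← hAeq i, sq]
        have hkey : ∑ i ∈ BI, (A i)^2
            ≤ C * (∑ i ∈ BI, |A i| ^ p * wK i) ^ (1/p : ℝ) := by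
          calc ∑ i ∈ BI, (A i)^2 = ∑ M ∈ 𝒟, (T aA) M * ev M * wK M := hs2
            _ ≤ (Iq 𝒟 p (T aA)) ^ (1/p : ℝ) := pair_le hp h𝒟 (T aA) ev heQ
            _ = HpNorm 𝒟 p (T aA) := (HpNorm_eq p (T aA)).symm
            _ ≤ C * HpNorm 𝒟 p aA := hT aA
            _ = C * (∑ i ∈ BI, |A i| ^ p * wK i) ^ (1/p : ℝ) := by
                rw [HpNorm_eq, hIqaA]
        exact detK hp hple hC hβ0 rfl hwBI hw1BI hkey
      have hint : Integrable (fun ω => ∑ i ∈ BI, (∑ J ∈ BI', θ J ω * t i J)^2) P :=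
        integrable_finset_sum _ fun i _ => integrable_sq_sum hmeas hlaw BI' (fun J => t i J)
      calc (∫ ω, (∑ i ∈ BI, (∑ J ∈ BI', θ J ω * t i J)^2) ∂P)
          ≤ ∫ _ : Ω, C^2 * β ∂P :=
            MeasureTheory.integral_mono_ae hint (integrable_const _) hae
        _ = C^2 * β := hconst
    · -- L-side, p ≥ 2
      have hm2 : ∀ J, (∫ ω, (∑ i ∈ BI, θ i ω * t i J)^2 ∂P) = ∑ i ∈ BI, (t i J)^2 :=
        fun J => exp_sq hmeas hlaw hindep BI (fun i => t i J)
      have hsum2 : ∑ J ∈ BI', ∑ i ∈ BI, (t i J)^2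
          = ∫ ω, (∑ J ∈ BI', (∑ i ∈ BI, θ i ω * t i J)^2) ∂P := by
        rw [MeasureTheory.integral_finset_sum _
          (fun J _ => integrable_sq_sum hmeas hlaw BI (fun i => t i J))]
        exact (Finset.sum_congr rfl fun J _ => (hm2 J).symm)
      rw [hsum2]
      have hae : ∀ᵐ ω ∂P, (∑ J ∈ BI', (∑ i ∈ BI, θ i ω * t i J)^2) ≤ C^2 * β := by
        filter_upwards [hgood] with ω hω
        set cv : (ℕ×ℕ) → ℝ := fun K => if K ∈ BI then θ K ω else 0 with hcvdef
        have hcsupp : ∀ M, M ∉ BI → cv M = 0 := fun M h => if_neg h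
        have hcabs : ∀ M ∈ BI, |cv M| = 1 := by
          intro M hM
          rw [hcvdef]
          simp only
          rw [if_pos hM]
          rcases hω M (Finset.mem_union_left _ hM) with h | h <;> rw [h] <;> norm_num
        have hXJ : ∀ J ∈ BI', (∑ i ∈ BI, θ i ω * t i J) = (T cv) J * wK J := by
          intro J hJ
          have h1 : ∫ x, haarFn 𝒟 (T cv) x * haar J x ∂μ0
              = ∑ i ∈ BI, θ i ω * t i J := by
            rw [hcvdef, T_ite T BI (fun K => θ K ω), integral_sum_smul_mul_haar]
          rw [← h1, pairing_haar h𝒟 (T cv) (hBI' hJ)]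
        have hsum3 : ∑ J ∈ BI', (∑ i ∈ BI, θ i ω * t i J)^2
            = ∑ J ∈ BI', ((T cv) J * wK J)^2 :=
          Finset.sum_congr rfl fun J hJ => by rw [hXJ J hJ]
        rw [hsum3]
        -- Hölder bound via detL
        have hIqc : Iq 𝒟 p cv ≤ 1 := Iq_sign_le_one hp h𝒟 hBI hPD hcsupp hcabs
        have hHc : HpNorm 𝒟 p cv ≤ 1 := by
          rw [HpNorm_eq]
          exact Real.rpow_le_one (Iq_nonneg 𝒟 p cv) hIqc (by positivity)
        have hHTc : HpNorm 𝒟 p (T cv) ≤ C := by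
          calc HpNorm 𝒟 p (T cv) ≤ C * HpNorm 𝒟 p cv := hT cv
            _ ≤ C * 1 := mul_le_mul_of_nonneg_left hHc hC
            _ = C := mul_one C
        have hIqTc : Iq 𝒟 p (T cv) ≤ C ^ p := Iq_le_pow hp hHTc
        have hsum4 : ∑ J ∈ BI', |(T cv) J| ^ p * wK J ≤ C ^ p :=
          (sum_le_Iq hp h𝒟 hBI' hPD' (T cv)).trans hIqTc
        exact detL hpge hC hβ0 hwBI' hw1BI' hsum4
      have hint : Integrable (fun ω => ∑ J ∈ BI', (∑ i ∈ BI, θ i ω * t i J)^2) P :=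
        integrable_finset_sum _ fun J _ => integrable_sq_sum hmeas hlaw BI (fun i => t i J)
      calc (∫ ω, (∑ J ∈ BI', (∑ i ∈ BI, θ i ω * t i J)^2) ∂P)
          ≤ ∫ _ : Ω, C^2 * β ∂P :=
            MeasureTheory.integral_mono_ae hint (integrable_const _) hae
        _ = C^2 * β := hconst
  calc ∑ J ∈ BI', ∑ i ∈ BI, (t i J)^2 ≤ C^2 * β := hmain
    _ ≤ C^2 * α ^ ((1:ℝ)/2) :=
        mul_le_mul_of_nonneg_left (min_le_rpow_half hα) (by positivity)
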